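/- arXiv:2012.14858 — 8 statements merged into one kernel-verified Lean document; each statement's English description precedes it below -/
import Mathlib

section
/- Let E be a compact convex subset of a finite-dimensional real inner product space V and let F ⊆ E be an exposed face of E, i.e. F = F_u(E) for some u ∈ V, where F_u(E) = {x ∈ E : ⟨x, u⟩ = max_{y ∈ E} ⟨y, u⟩}. Then the set C_F := {u ∈ V : F = F_u(E)} is a convex cone. Moreover, if K is a compact subgroup of the orthogonal group of V such that k(E) = E and k(F) = F for every k ∈ K, then C_F contains a vector fixed by every element of K. -/
/-- The exposed face of `E` defined by `u`: the set of points of `E` where the linear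
functional `x ↦ ⟪x, u⟫` attains its maximum over `E`. -/
def exposedFace {V : Type*} [NormedAddCommGroup V] [InnerProductSpace ℝ V]
    (E : Set V) (u : V) : Set V :=
  {x ∈ E | ∀ y ∈ E, (inner ℝ y u : ℝ) ≤ inner ℝ x u}

lemma mem_exposedFace_iff {V : Type*} [NormedAddCommGroup V] [InnerProductSpace ℝ V]
    {E : Set V} {u x : V} :
    x ∈ exposedFace E u ↔ x ∈ E ∧ ∀ y ∈ E, (inner ℝ y u : ℝ) ≤ inner ℝ x u := Iff.rfl

/-- Padding a sum over a finset by zeros to a sum over `Fin n`. -/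
lemma sum_pad {M : Type*} [AddCommMonoid M] {α : Type*} (t : Finset α) {n : ℕ}
    (hm : t.card ≤ n) (g : α → M) :
    (∑ i : Fin n, (if h : (i : ℕ) < t.card then g ((t.equivFin.symm ⟨i, h⟩ : t) : α) else 0))
      = ∑ y ∈ t, g y := by
  classical
  have h1 : (∑ i : Fin n, (if h : (i : ℕ) < t.card then g ((t.equivFin.symm ⟨i, h⟩ : t) : α) else 0))
      = ∑ i ∈ (Finset.univ : Finset (Fin t.card)).map (Fin.castLEEmb hm),
          (if h : (i : ℕ) < t.card then g ((t.equivFin.symm ⟨i, h⟩ : t) : α) else 0) := by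
    refine (Finset.sum_subset (Finset.subset_univ _) ?_).symm
    intro i _ hi
    rw [dif_neg]
    intro h
    exact hi (Finset.mem_map.2 ⟨⟨(i : ℕ), h⟩, Finset.mem_univ _, Fin.ext rfl⟩)
  rw [h1, Finset.sum_map]
  have h2 : ∀ j : Fin t.card,
      (if h : ((Fin.castLEEmb hm j : Fin n) : ℕ) < t.card
        then g ((t.equivFin.symm ⟨((Fin.castLEEmb hm j : Fin n) : ℕ), h⟩ : t) : α) else 0)
        = g ((t.equivFin.symm j : t) : α) := fun j => dif_pos j.2
  rw [Finset.sum_congr rfl fun j _ => h2 j]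
  rw [Equiv.sum_comp t.equivFin.symm (fun y : t => g (y : α))]
  exact Finset.sum_coe_sort t g

/-- In a finite-dimensional normed real vector space, the convex hull of a nonempty compact
set is compact. -/
lemma isCompact_convexHull_of_isCompact {V : Type*} [NormedAddCommGroup V]
    [NormedSpace ℝ V] [FiniteDimensional ℝ V] {s : Set V} (hs : IsCompact s)
    (hne : s.Nonempty) : IsCompact (convexHull ℝ s) := by
  classical
  obtain ⟨x₀, hx₀⟩ := hne
  set n := Module.finrank ℝ V + 1 with hn
  let f : (Fin n → ℝ) × (Fin n → V) → V := fun p => ∑ i, p.1 i • p.2 i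
  have hf : Continuous f := continuous_finset_sum _ fun i _ =>
    ((continuous_apply i).comp continuous_fst).smul ((continuous_apply i).comp continuous_snd)
  have hT : IsCompact ((stdSimplex ℝ (Fin n)) ×ˢ (Set.univ.pi fun _ : Fin n => s)) :=
    (isCompact_stdSimplex (𝕜 := ℝ) (ι := Fin n)).prod (isCompact_univ_pi fun _ => hs)
  have himg : f '' ((stdSimplex ℝ (Fin n)) ×ˢ (Set.univ.pi fun _ : Fin n => s))
      = convexHull ℝ s := by
    apply Set.Subset.antisymm
    · rintro _ ⟨⟨w, z⟩, ⟨hw, hz⟩, rfl⟩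
      exact (convex_convexHull ℝ s).sum_mem (fun i _ => hw.1 i) hw.2
        (fun i _ => subset_convexHull ℝ s (hz i (Set.mem_univ i)))
    · intro x hx
      rw [convexHull_eq_union] at hx
      simp only [Set.mem_iUnion] at hx
      obtain ⟨t, hts, hai, hxt⟩ := hx
      have hm : t.card ≤ n := by
        have h1 := hai.card_le_finrank_succ
        have h2 : Module.finrank ℝ (vectorSpan ℝ (Set.range ((↑) : t → V)))
            ≤ Module.finrank ℝ V := Submodule.finrank_le _
        rw [Fintype.card_coe] at h1
        rw [hn]
        omega
      rw [Finset.convexHull_eq] at hxt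
      obtain ⟨w, hw0, hw1, hwx⟩ := hxt
      rw [t.centerMass_eq_of_sum_1 _ hw1] at hwx
      simp only [id_eq] at hwx
      refine ⟨(fun i => if h : (i : ℕ) < t.card then w ((t.equivFin.symm ⟨i, h⟩ : t) : V) else 0,
        fun i => if h : (i : ℕ) < t.card then ((t.equivFin.symm ⟨i, h⟩ : t) : V) else x₀),
        ⟨⟨fun i => ?_, ?_⟩, fun i _ => ?_⟩, ?_⟩
      · dsimp only
        split
        · exact hw0 _ (Finset.coe_mem _)
        · exact le_refl 0
      · exact sum_pad t hm w ▸ hw1 ▸ rfl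
      · dsimp only
        split
        · exact hts (Finset.coe_mem _)
        · exact hx₀
      · dsimp only [f]
        have : (∑ i : Fin n,
            (if h : (i : ℕ) < t.card then w ((t.equivFin.symm ⟨i, h⟩ : t) : V) else 0) •
            (if h : (i : ℕ) < t.card then ((t.equivFin.symm ⟨i, h⟩ : t) : V) else x₀))
            = ∑ i : Fin n, (if h : (i : ℕ) < t.card then
                w ((t.equivFin.symm ⟨i, h⟩ : t) : V) • ((t.equivFin.symm ⟨i, h⟩ : t) : V) else 0) := by
          refine Finset.sum_congr rfl fun i _ => ?_
          by_cases h : (i : ℕ) < t.card <;> simp [h]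
        rw [this, sum_pad t hm (fun y => w y • y), ← hwx]
  rw [← himg]
  exact hT.image hf

/-- Let `E` be a compact convex subset of a finite-dimensional real inner
product space `V` and `F = F_{u₀}(E)` an exposed face of `E`.  Then
`C_F = {u : V | F = F_u(E)}` is a convex cone.  Moreover, if `K` is a compact subgroup of the
orthogonal group of `V` preserving both `E` and `F`, then `C_F` contains a vector fixed by
every element of `K`. -/
theorem stmt_3 {V : Type*} [NormedAddCommGroup V] [InnerProductSpace ℝ V]
    [FiniteDimensional ℝ V] (E F : Set V) (hEconv : Convex ℝ E) (hEcomp : IsCompact E)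
    (u₀ : V) (hF : F = exposedFace E u₀)
    (K : Set (V →L[ℝ] V)) (hK1 : (1 : V →L[ℝ] V) ∈ K)
    (hKmul : ∀ k ∈ K, ∀ l ∈ K, k * l ∈ K)
    (hKinv : ∀ k ∈ K, ContinuousLinearMap.adjoint k ∈ K)
    (hKorth : ∀ k ∈ K, ContinuousLinearMap.adjoint k * k = 1)
    (hKcomp : IsCompact K)
    (hKE : ∀ k ∈ K, k '' E = E) (hKF : ∀ k ∈ K, k '' F = F) :
    Convex ℝ {u : V | F = exposedFace E u} ∧
    (∀ u ∈ {u : V | F = exposedFace E u}, ∀ c : ℝ, 0 < c →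
      c • u ∈ {u : V | F = exposedFace E u}) ∧
    ∃ u ∈ {u : V | F = exposedFace E u}, ∀ k ∈ K, k u = u := by
  classical
  -- Every element of `K` preserves the inner product.
  have hiso : ∀ k ∈ K, ∀ a b : V, (inner ℝ (k a) (k b) : ℝ) = inner ℝ a b := by
    intro k hk a b
    have h1 : (inner ℝ ((ContinuousLinearMap.adjoint k * k) a) b : ℝ) = inner ℝ (k a) (k b) := by
      rw [ContinuousLinearMap.mul_apply, ContinuousLinearMap.adjoint_inner_left]
    rw [hKorth k hk] at h1
    simpa using h1.symm
  by_cases hE : E.Nonempty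
  case neg =>
    have hEe : E = ∅ := Set.not_nonempty_iff_eq_empty.mp hE
    have hFe : ∀ u : V, exposedFace E u = (∅ : Set V) := by
      intro u
      rw [hEe]
      ext x
      simp [exposedFace]
    have hCuniv : {u : V | F = exposedFace E u} = Set.univ := by
      ext u
      simp only [Set.mem_setOf_eq, Set.mem_univ, iff_true]
      rw [hF, hFe u₀, hFe u]
    refine ⟨?_, ?_, ?_⟩
    · rw [hCuniv]; exact convex_univ
    · intro u _ c _; rw [hCuniv]; trivial
    · exact ⟨0, by rw [hCuniv]; trivial, fun k _ => map_zero k⟩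
  -- Main case : `E` is nonempty.
  have hFsub : F ⊆ E := by
    rw [hF]; exact fun x hx => hx.1
  have hFne : F.Nonempty := by
    have hcont : Continuous fun x : V => (inner ℝ x u₀ : ℝ) :=
      continuous_id.inner continuous_const
    obtain ⟨x, hxE, hx⟩ := hEcomp.exists_isMaxOn hE hcont.continuousOn
    exact ⟨x, by rw [hF]; exact ⟨hxE, fun y hy => hx hy⟩⟩
  -- Convexity of `C_F`.
  have hCconv : Convex ℝ {u : V | F = exposedFace E u} := by
    intro u hu v hv a b ha hb hab
    have hu' : F = exposedFace E u := hu
    have hv' : F = exposedFace E v := hv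
    rcases eq_or_lt_of_le ha with ha0 | ha
    · have hb1 : b = 1 := by linarith
      show F = exposedFace E (a • u + b • v)
      rw [← ha0, hb1]
      simpa using hv'
    rcases eq_or_lt_of_le hb with hb0 | hb
    · have ha1 : a = 1 := by linarith
      show F = exposedFace E (a • u + b • v)
      rw [← hb0, ha1]
      simpa using hu'
    show F = exposedFace E (a • u + b • v)
    apply Set.Subset.antisymm
    · intro x hx
      have hxu : x ∈ exposedFace E u := hu' ▸ hx
      have hxv : x ∈ exposedFace E v := hv' ▸ hx
      refine ⟨hxu.1, fun y hy => ?_⟩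
      have h1 := hxu.2 y hy
      have h2 := hxv.2 y hy
      simp only [inner_add_right, real_inner_smul_right]
      nlinarith
    · intro x hx
      obtain ⟨z, hz⟩ := hFne
      have hzu : z ∈ exposedFace E u := hu' ▸ hz
      have hzv : z ∈ exposedFace E v := hv' ▸ hz
      have hxE : x ∈ E := hx.1
      have hw := hx.2 z (hFsub hz)
      simp only [inner_add_right, real_inner_smul_right] at hw
      have h2 := hzu.2 x hxE
      have h3 := hzv.2 x hxE
      have hequ : (inner ℝ x u : ℝ) = inner ℝ z u := by nlinarith
      rw [hu']
      exact ⟨hxE, fun y hy => by rw [hequ]; exact hzu.2 y hy⟩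
  -- `C_F` is a cone.
  have hCsmul : ∀ u ∈ {u : V | F = exposedFace E u}, ∀ c : ℝ, 0 < c →
      c • u ∈ {u : V | F = exposedFace E u} := by
    intro u hu c hc
    have hu' : F = exposedFace E u := hu
    show F = exposedFace E (c • u)
    rw [hu']
    ext x
    simp only [mem_exposedFace_iff, real_inner_smul_right]
    constructor
    · rintro ⟨hxE, h⟩
      exact ⟨hxE, fun y hy => (mul_le_mul_iff_of_pos_left hc).2 (h y hy)⟩
    · rintro ⟨hxE, h⟩
      exact ⟨hxE, fun y hy => (mul_le_mul_iff_of_pos_left hc).1 (h y hy)⟩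
  -- `C_F` is invariant under `K`.
  have hinv : ∀ k ∈ K, ∀ u ∈ {u : V | F = exposedFace E u},
      k u ∈ {u : V | F = exposedFace E u} := by
    intro k hk u hu
    have hu' : F = exposedFace E u := hu
    show F = exposedFace E (k u)
    apply Set.Subset.antisymm
    · intro x hx
      rw [← hKF k hk] at hx
      obtain ⟨x', hx'F, rfl⟩ := hx
      have hx'e : x' ∈ exposedFace E u := hu' ▸ hx'F
      refine ⟨(hKE k hk) ▸ Set.mem_image_of_mem k (hFsub hx'F), fun y hy => ?_⟩
      rw [← hKE k hk] at hy
      obtain ⟨y', hy'E, rfl⟩ := hy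
      rw [hiso k hk y' u, hiso k hk x' u]
      exact hx'e.2 y' hy'E
    · intro x hx
      obtain ⟨hxE, hxmax⟩ := hx
      rw [← hKE k hk] at hxE
      obtain ⟨x', hx'E, rfl⟩ := hxE
      have hx'F : x' ∈ F := by
        rw [hu']
        refine ⟨hx'E, fun y hy => ?_⟩
        have := hxmax (k y) ((hKE k hk) ▸ Set.mem_image_of_mem k hy)
        rwa [hiso k hk y u, hiso k hk x' u] at this
      rw [← hKF k hk]
      exact Set.mem_image_of_mem k hx'F
  refine ⟨hCconv, hCsmul, ?_⟩
  -- The orbit of `u₀` under `K`.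
  set O : Set V := (fun k : V →L[ℝ] V => k u₀) '' K with hO
  have hOsub : O ⊆ {u : V | F = exposedFace E u} := by
    rintro _ ⟨k, hk, rfl⟩
    exact hinv k hk u₀ hF
  have hOcomp : IsCompact O :=
    hKcomp.image (ContinuousLinearMap.apply ℝ V u₀).continuous
  have hOne : O.Nonempty := ⟨u₀, 1, hK1, rfl⟩
  set D := convexHull ℝ O with hD
  have hDcomp : IsCompact D := isCompact_convexHull_of_isCompact hOcomp hOne
  have hDsub : D ⊆ {u : V | F = exposedFace E u} := convexHull_min hOsub hCconv
  have hDne : D.Nonempty := hOne.mono (subset_convexHull ℝ O)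
  have hDconvex : Convex ℝ D := convex_convexHull ℝ O
  -- `D` is invariant under `K`.
  have hDinv : ∀ k ∈ K, ∀ x ∈ D, k x ∈ D := by
    intro k hk
    have hOD : O ⊆ (⇑k) ⁻¹' D := by
      rintro _ ⟨l, hl, rfl⟩
      have : (k * l) u₀ ∈ O := ⟨k * l, hKmul k hk l hl, rfl⟩
      exact subset_convexHull ℝ O this
    intro x hx
    have : D ⊆ (⇑k) ⁻¹' D := by
      rw [hD]
      refine convexHull_min hOD ?_
      have := hDconvex.linear_preimage (k : V →ₗ[ℝ] V)
      simpa using this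
    exact this hx
  -- Take the point of minimal norm in `D`.
  obtain ⟨v, hvD, hvmin⟩ := hDcomp.exists_isMinOn hDne continuous_norm.continuousOn
  refine ⟨v, hDsub hvD, fun k hk => ?_⟩
  have hkv : k v ∈ D := hDinv k hk v hvD
  have hm : (1 / 2 : ℝ) • v + (1 / 2 : ℝ) • (k v) ∈ D :=
    hDconvex hvD hkv (by norm_num) (by norm_num) (by norm_num)
  have hnorm : ‖v‖ ≤ ‖(1 / 2 : ℝ) • v + (1 / 2 : ℝ) • k v‖ := hvmin hm
  have hkvnorm : ‖k v‖ = ‖v‖ := by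
    have h1 := hiso k hk v v
    rw [real_inner_self_eq_norm_sq, real_inner_self_eq_norm_sq] at h1
    nlinarith [norm_nonneg (k v), norm_nonneg v]
  have h2 : 2 * ‖v‖ ≤ ‖v + k v‖ := by
    have hcomb : (1 / 2 : ℝ) • v + (1 / 2 : ℝ) • k v = (1 / 2 : ℝ) • (v + k v) :=
      (smul_add _ _ _).symm
    rw [hcomb, norm_smul] at hnorm
    simp only [norm_div, Real.norm_ofNat, norm_one] at hnorm
    linarith
  have hpar1 := norm_add_sq_real v (k v)
  have hpar2 := norm_sub_sq_real (k v) v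
  have hip : (inner ℝ (k v) v : ℝ) = inner ℝ v (k v) := real_inner_comm _ _
  have hle : ‖k v - v‖ ^ 2 ≤ 0 := by nlinarith [norm_nonneg (v + k v), norm_nonneg v]
  have h0 : ‖k v - v‖ = 0 :=
    le_antisymm (by nlinarith [norm_nonneg (k v - v)]) (norm_nonneg _)
  have : k v - v = 0 := norm_eq_zero.mp h0
  exact sub_eq_zero.mp this
end

section
/- Let V be a finite-dimensional complex inner product space, β a self-adjoint endomorphism of V with largest eigenvalue λ₁ and eigenspace W = ker(β − λ₁). Let M ⊆ ℙ(V) be a closed subset which is full (i.e., the nonzero vectors representing points of M span V) and invariant under the flow [v] ↦ [exp(tβ)v] for all t ∈ ℝ. Then M ∩ ℙ(W) ≠ ∅, i.e., there exists a nonzero w ∈ W with [w] ∈ M. -/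
open scoped LinearAlgebra.Projectivization
open scoped InnerProductSpace

noncomputable instance stmt9.instTop (V : Type*) [NormedAddCommGroup V]
    [InnerProductSpace ℂ V] : TopologicalSpace (ℙ ℂ V) :=
  instTopologicalSpaceQuotient

lemma stmt9.exp_apply_ne_zero {V : Type*} [NormedAddCommGroup V] [InnerProductSpace ℂ V]
    [FiniteDimensional ℂ V] (A : V →L[ℂ] V) (v : V) (hv : v ≠ 0) :
    NormedSpace.exp A v ≠ 0 := by
  intro h
  have h1 : NormedSpace.exp (-A) * NormedSpace.exp A = 1 := by
    rw [← NormedSpace.exp_add_of_commute_of_mem_ball (𝕂 := ℂ) (Commute.neg_left (Commute.refl A))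
      ((NormedSpace.expSeries_radius_eq_top ℂ (V →L[ℂ] V)).symm ▸ edist_lt_top _ _)
      ((NormedSpace.expSeries_radius_eq_top ℂ (V →L[ℂ] V)).symm ▸ edist_lt_top _ _),
      neg_add_cancel, NormedSpace.exp_zero]
  have h2 : NormedSpace.exp (-A) (NormedSpace.exp A v) = v := by
    have := congrArg (fun f : V →L[ℂ] V => f v) h1
    simpa using this
  rw [h] at h2
  simp at h2
  exact hv h2.symm

lemma stmt9.exp_apply_eigenvector {V : Type*} [NormedAddCommGroup V] [InnerProductSpace ℂ V]
    [FiniteDimensional ℂ V] (A : V →L[ℂ] V) (v : V) (c : ℂ) (h : A v = c • v) :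
    NormedSpace.exp A v = Complex.exp c • v := by
  have hpow : ∀ m : ℕ, (A ^ m) v = c ^ m • v := by
    intro m
    induction m with
    | zero => simp
    | succ k ih =>
      rw [pow_succ, ContinuousLinearMap.mul_apply, h, map_smul, ih, smul_smul, pow_succ,
        mul_comm]
  have hs : Summable (fun m : ℕ => ((m.factorial : ℝ))⁻¹ • A ^ m) :=
    NormedSpace.expSeries_summable' (𝕂 := ℝ) A
  have hs2 : Summable (fun m : ℕ => ((m.factorial : ℝ))⁻¹ • c ^ m) :=
    NormedSpace.expSeries_summable' (𝕂 := ℝ) c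
  calc NormedSpace.exp A v
      = (∑' m : ℕ, ((m.factorial : ℝ))⁻¹ • A ^ m) v := by rw [NormedSpace.exp_eq_tsum ℝ]
    _ = ∑' m : ℕ, (((m.factorial : ℝ))⁻¹ • A ^ m) v :=
        (ContinuousLinearMap.apply ℂ V v).map_tsum hs
    _ = ∑' m : ℕ, (((m.factorial : ℝ))⁻¹ • c ^ m) • v := by
        refine tsum_congr fun m => ?_
        rw [ContinuousLinearMap.smul_apply, hpow, smul_assoc]
    _ = (∑' m : ℕ, ((m.factorial : ℝ))⁻¹ • c ^ m) • v := hs2.tsum_smul_const v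
    _ = NormedSpace.exp c • v := by rw [NormedSpace.exp_eq_tsum ℝ]
    _ = Complex.exp c • v := by rw [Complex.exp_eq_exp_ℂ]

/-- Let `β` be a self-adjoint endomorphism of a finite-dimensional complex
inner product space `V` with largest eigenvalue `λ₁` and eigenspace `W = ker (β - λ₁)`.
Let `M ⊆ ℙ(V)` be a closed subset which is full (its representatives span `V`) and invariant
under the flow `[v] ↦ [exp(tβ)v]`.  Then `M ∩ ℙ(W) ≠ ∅`, i.e. there is a nonzero `w ∈ W` with
`[w] ∈ M`. -/
theorem stmt_9 {V : Type*} [NormedAddCommGroup V] [InnerProductSpace ℂ V]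
    [FiniteDimensional ℂ V] (β : V →L[ℂ] V) (hβ : IsSelfAdjoint β) (lam₁ : ℝ)
    (hlam : IsGreatest {μ : ℝ |
      Module.End.HasEigenvalue ((β : V →ₗ[ℂ] V) : Module.End ℂ V) (μ : ℂ)} lam₁)
    (M : Set (ℙ ℂ V)) (hMcl : IsClosed M)
    (hfull : Submodule.span ℂ {v : V | ∃ hv : v ≠ 0, Projectivization.mk ℂ v hv ∈ M} = ⊤)
    (hinv : ∀ (v : V) (hv : v ≠ 0), Projectivization.mk ℂ v hv ∈ M → ∀ t : ℝ,
      Projectivization.mk ℂ (NormedSpace.exp (t • β) v)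
        (stmt9.exp_apply_ne_zero (t • β) v hv) ∈ M) :
    ∃ (w : V) (hw : w ≠ 0), β w = (lam₁ : ℂ) • w ∧ Projectivization.mk ℂ w hw ∈ M := by
  classical
  have hsym : (β : V →ₗ[ℂ] V).IsSymmetric := hβ.isSymmetric
  set n := Module.finrank ℂ V with hndef
  have hn : Module.finrank ℂ V = n := rfl
  set b := hsym.eigenvectorBasis hn with hbdef
  set μ := hsym.eigenvalues hn with hμdef
  have hb : ∀ i, β (b i) = (μ i : ℂ) • b i := fun i => hsym.apply_eigenvectorBasis hn i
  -- all eigenvalues are ≤ lam₁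
  have hle : ∀ i, μ i ≤ lam₁ := by
    intro i
    exact hlam.2 (hsym.hasEigenvalue_eigenvalues hn i)
  -- exp (t • β) on basis vectors
  have hexp : ∀ (t : ℝ) (i : Fin n),
      NormedSpace.exp (t • β) (b i) = Complex.exp (t * μ i : ℝ) • b i := by
    intro t i
    refine stmt9.exp_apply_eigenvector (t • β) (b i) ((t * μ i : ℝ) : ℂ) ?_
    rw [ContinuousLinearMap.smul_apply, hb, ← Complex.coe_smul, smul_smul,
      ← Complex.ofReal_mul]
  -- there is an index with eigenvalue lam₁
  have hex : ∃ i, μ i = lam₁ := by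
    obtain ⟨w₀, hw₀⟩ := hlam.1.exists_hasEigenvector
    have hw₀v : β w₀ = (lam₁ : ℂ) • w₀ := hw₀.apply_eq_smul
    have key : ∀ i, ((μ i : ℂ) - lam₁) * ⟪b i, w₀⟫_ℂ = 0 := by
      intro i
      have h1 : ⟪β (b i), w₀⟫_ℂ = ⟪b i, β w₀⟫_ℂ := hsym (b i) w₀
      rw [hb, hw₀v, inner_smul_left, inner_smul_right, Complex.conj_ofReal] at h1
      rw [sub_mul, h1]
      ring
    have hexist : ∃ i, ⟪b i, w₀⟫_ℂ ≠ 0 := by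
      by_contra h
      push_neg at h
      apply hw₀.2
      rw [← b.sum_repr' w₀]
      simp [h]
    obtain ⟨i, hi⟩ := hexist
    refine ⟨i, ?_⟩
    rcases mul_eq_zero.mp (key i) with h | h
    · exact_mod_cast sub_eq_zero.mp h
    · exact absurd h hi
  obtain ⟨i₀, hi₀⟩ := hex
  -- there is a point of M whose i₀-coordinate is nonzero
  have hpt : ∃ (v : V) (hv : v ≠ 0), Projectivization.mk ℂ v hv ∈ M ∧ ⟪b i₀, v⟫_ℂ ≠ 0 := by
    by_contra h
    push_neg at h
    have hsub : {v : V | ∃ hv : v ≠ 0, Projectivization.mk ℂ v hv ∈ M} ⊆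
        ((ℂ ∙ b i₀)ᗮ : Submodule ℂ V) := by
      rintro x ⟨hx, hxM⟩
      rw [SetLike.mem_coe, Submodule.mem_orthogonal_singleton_iff_inner_right]
      exact h x hx hxM
    have htop : (⊤ : Submodule ℂ V) ≤ (ℂ ∙ b i₀)ᗮ := by
      rw [← hfull]
      exact Submodule.span_le.mpr hsub
    have : ⟪b i₀, b i₀⟫_ℂ = 0 := by
      have := htop (Submodule.mem_top (x := b i₀))
      rwa [Submodule.mem_orthogonal_singleton_iff_inner_right] at this
    rw [inner_self_eq_zero] at this
    exact b.toBasis.ne_zero i₀ (by simpa using this)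
  obtain ⟨v, hv, hvM, hc⟩ := hpt
  set c : Fin n → ℂ := fun i => ⟪b i, v⟫_ℂ with hcdef
  -- the flow applied to v
  have hflow : ∀ t : ℝ, NormedSpace.exp (t • β) v
      = ∑ i, (Complex.exp (t * μ i : ℝ) * c i) • b i := by
    intro t
    conv_lhs => rw [← b.sum_repr' v]
    rw [map_sum]
    refine Finset.sum_congr rfl fun i _ => ?_
    rw [map_smul, hexp, smul_smul, mul_comm]
  set g : ℝ → V := fun t => ∑ i, (Complex.exp (t * (μ i - lam₁) : ℝ) * c i) • b i with hgdef
  -- g t is a scalar multiple of the flow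
  have hgeq : ∀ t : ℝ, g t
      = (Complex.exp ((-(t * lam₁) : ℝ) : ℂ)) • NormedSpace.exp (t • β) v := by
    intro t
    rw [hflow, Finset.smul_sum]
    refine Finset.sum_congr rfl fun i _ => ?_
    rw [smul_smul, ← mul_assoc, ← Complex.exp_add]
    congr 2
    push_cast
    ring
  have hg0 : ∀ t : ℝ, g t ≠ 0 := by
    intro t h0
    rw [hgeq] at h0
    exact stmt9.exp_apply_ne_zero (t • β) v hv
      (by simpa [Complex.exp_ne_zero] using smul_eq_zero.mp h0)
  -- g t represents a point of M
  have hgM : ∀ t : ℝ, Projectivization.mk ℂ (g t) (hg0 t) ∈ M := by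
    intro t
    have := hinv v hv hvM t
    have heq : Projectivization.mk ℂ (g t) (hg0 t)
        = Projectivization.mk ℂ (NormedSpace.exp (t • β) v)
          (stmt9.exp_apply_ne_zero (t • β) v hv) := by
      rw [Projectivization.mk_eq_mk_iff']
      exact ⟨Complex.exp ((-(t * lam₁) : ℝ) : ℂ), (hgeq t).symm⟩
    rw [heq]
    exact this
  -- limit
  set w : V := ∑ i, (if μ i = lam₁ then c i else 0) • b i with hwdef
  have hglim : Filter.Tendsto g Filter.atTop (nhds w) := by
    rw [hgdef, hwdef]
    refine tendsto_finset_sum _ fun i _ => ?_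
    by_cases h : μ i = lam₁
    · simp only [h, sub_self, mul_zero, Complex.ofReal_zero, Complex.exp_zero, one_mul,
        if_pos rfl]
      exact tendsto_const_nhds
    · have hlt : μ i - lam₁ < 0 := sub_neg.mpr (lt_of_le_of_ne (hle i) h)
      have hfeq : (fun t : ℝ => (Complex.exp ((t * (μ i - lam₁) : ℝ) : ℂ) * c i) • b i)
          = fun t : ℝ => Real.exp (t * (μ i - lam₁)) • (c i • b i) := by
        funext t
        rw [← Complex.ofReal_exp, mul_smul, Complex.coe_smul]
      rw [hfeq, if_neg h, zero_smul]
      have h1 : Filter.Tendsto (fun t : ℝ => t * (μ i - lam₁)) Filter.atTop Filter.atBot :=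
        Filter.Tendsto.atTop_mul_const_of_neg hlt Filter.tendsto_id
      have h2 : Filter.Tendsto (fun t : ℝ => Real.exp (t * (μ i - lam₁)))
          Filter.atTop (nhds 0) := Real.tendsto_exp_atBot.comp h1
      simpa using h2.smul_const (c i • b i)
  have hw0 : w ≠ 0 := by
    intro h0
    apply hc
    have := b.orthonormal.inner_right_fintype (fun i => if μ i = lam₁ then c i else 0) i₀
    rw [← hwdef, h0, inner_zero_right] at this
    simp [hi₀] at this
    exact this.symm
  have hβw : β w = (lam₁ : ℂ) • w := by
    rw [hwdef, map_sum, Finset.smul_sum]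
    refine Finset.sum_congr rfl fun i _ => ?_
    rw [map_smul, hb, smul_comm]
    by_cases h : μ i = lam₁
    · rw [h]
    · simp [h]
  refine ⟨w, hw0, hβw, ?_⟩
  -- membership via closedness
  have hcont : Continuous (fun x : {u : V // u ≠ 0} => Projectivization.mk ℂ x.1 x.2) :=
    continuous_quotient_mk'
  have hsub : Filter.Tendsto (fun t : ℝ => (⟨g t, hg0 t⟩ : {u : V // u ≠ 0}))
      Filter.atTop (nhds ⟨w, hw0⟩) := by
    rw [tendsto_subtype_rng]
    exact hglim
  have htend : Filter.Tendsto (fun t : ℝ => Projectivization.mk ℂ (g t) (hg0 t))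
      Filter.atTop (nhds (Projectivization.mk ℂ w hw0)) :=
    (hcont.tendsto _).comp hsub
  exact hMcl.mem_of_tendsto htend (Filter.Eventually.of_forall hgM)
end

section
/- Let V be a finite-dimensional complex inner product space and let 𝔞 be a finite-dimensional real vector space of pairwise commuting self-adjoint endomorphisms of V. Define μ_𝔞 : ℙ(V) → 𝔞* (the real dual of 𝔞) by μ_𝔞([v])(β) = Re⟨βv, v⟩/‖v‖². Let M ⊆ ℙ(V) be a closed subset which is full (the representatives of its points span V) and invariant under [v] ↦ [exp(β)v] for every β ∈ 𝔞. If μ_𝔞(M) is convex, then μ_𝔞(M) = μ_𝔞(ℙ(V)). -/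
open scoped LinearAlgebra.Projectivization

noncomputable instance stmt10.instTop (V : Type*) [NormedAddCommGroup V]
    [InnerProductSpace ℂ V] : TopologicalSpace (ℙ ℂ V) :=
  instTopologicalSpaceQuotient

lemma stmt10.exp_apply_ne_zero {V : Type*} [NormedAddCommGroup V] [InnerProductSpace ℂ V]
    [FiniteDimensional ℂ V] (A : V →L[ℂ] V) (v : V) (hv : v ≠ 0) :
    NormedSpace.exp A v ≠ 0 := by
  letI : NormedAlgebra ℚ (V →L[ℂ] V) := NormedAlgebra.restrictScalars ℚ ℝ (V →L[ℂ] V)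
  intro h
  have h1 : NormedSpace.exp (-A) * NormedSpace.exp A = 1 := by
    rw [← NormedSpace.exp_add_of_commute (Commute.neg_left (Commute.refl A)),
      neg_add_cancel, NormedSpace.exp_zero]
  have h2 : NormedSpace.exp (-A) (NormedSpace.exp A v) = v := by
    have := congrArg (fun f : V →L[ℂ] V => f v) h1
    simpa using this
  rw [h] at h2
  simp at h2
  exact hv h2.symm

/-- The gradient map `μ_𝔞 : ℙ(V) → 𝔞*`, `μ_𝔞([v])(β) = Re⟨βv, v⟩/‖v‖²` (computed on a
representative; the value does not depend on the choice of representative). -/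
noncomputable def stmt10.mu {V : Type*} [NormedAddCommGroup V] [InnerProductSpace ℂ V]
    (𝔞 : Submodule ℝ (V →L[ℂ] V)) (p : ℙ ℂ V) : 𝔞 → ℝ :=
  fun β => (inner ℂ ((β : V →L[ℂ] V) p.rep) p.rep : ℂ).re / ‖p.rep‖ ^ 2

set_option maxHeartbeats 1000000
set_option synthInstance.maxHeartbeats 400000

open Module

namespace stmt10aux

variable {V : Type*} [NormedAddCommGroup V] [InnerProductSpace ℂ V]

lemma exp_apply_eigen [FiniteDimensional ℂ V] (B : V →L[ℂ] V) (c : ℝ) (x : V) (h : B x = c • x) :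
    NormedSpace.exp B x = Real.exp c • x := by
  have hpow : ∀ k : ℕ, (B ^ k) x = (c ^ k) • x := by
    intro k; induction k with
    | zero => simp
    | succ k ih =>
      rw [pow_succ, ContinuousLinearMap.mul_apply, h,
        ContinuousLinearMap.map_smul_of_tower, ih, smul_smul, ← pow_succ']
  have hsum : Summable (fun k : ℕ => ((k.factorial : ℝ))⁻¹ • B ^ k) :=
    NormedSpace.expSeries_summable' B
  have hsum2 : Summable (fun k : ℕ => ((k.factorial : ℝ))⁻¹ * c ^ k) := by
    have := Real.summable_pow_div_factorial c
    simpa [div_eq_mul_inv, mul_comm] using this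
  have happ : NormedSpace.exp B x = ∑' k : ℕ, (((k.factorial : ℝ))⁻¹ • B ^ k) x := by
    rw [NormedSpace.exp_eq_tsum ℝ]
    exact ((ContinuousLinearMap.apply ℂ V x).hasSum hsum.hasSum).tsum_eq.symm ▸ rfl
  rw [happ]
  have : ∀ k : ℕ, (((k.factorial : ℝ))⁻¹ • B ^ k) x = (((k.factorial : ℝ))⁻¹ * c ^ k) • x := by
    intro k
    rw [ContinuousLinearMap.smul_apply, hpow, smul_smul]
  rw [tsum_congr this, hsum2.tsum_smul_const]
  congr 1
  rw [Real.exp_eq_exp_ℝ, NormedSpace.exp_eq_tsum ℝ]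
  simp [smul_eq_mul]

lemma mu_mk (𝔞 : Submodule ℝ (V →L[ℂ] V)) (v : V) (hv : v ≠ 0) :
    stmt10.mu 𝔞 (Projectivization.mk ℂ v hv) =
      fun β : 𝔞 => (inner ℂ ((β : V →L[ℂ] V) v) v : ℂ).re / ‖v‖ ^ 2 := by
  set p := Projectivization.mk ℂ v hv with hp
  obtain ⟨a, ha⟩ := (Projectivization.mk_eq_mk_iff ℂ p.rep v p.rep_nonzero hv).mp
    (Projectivization.mk_rep p)
  funext β
  show (inner ℂ ((β : V →L[ℂ] V) p.rep) p.rep : ℂ).re / ‖p.rep‖ ^ 2 = _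
  rw [← ha, Units.smul_def]
  have h1 : (inner ℂ ((β : V →L[ℂ] V) ((a : ℂ) • v)) ((a : ℂ) • v) : ℂ)
      = (Complex.normSq a : ℂ) * inner ℂ ((β : V →L[ℂ] V) v) v := by
    rw [map_smul, inner_smul_left, inner_smul_right, ← mul_assoc, ← Complex.normSq_eq_conj_mul_self]
  have h2 : ‖(a : ℂ) • v‖ ^ 2 = Complex.normSq a * ‖v‖ ^ 2 := by
    rw [norm_smul, mul_pow, Complex.normSq_eq_norm_sq]
  rw [h1, h2, Complex.re_ofReal_mul, mul_div_mul_left]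
  exact Complex.normSq_pos.mpr a.ne_zero |>.ne'

lemma mu_eigen (𝔞 : Submodule ℝ (V →L[ℂ] V)) (u : V) (hu : u ≠ 0) (α : 𝔞 → ℝ)
    (h : ∀ β : 𝔞, (β : V →L[ℂ] V) u = (α β : ℂ) • u) :
    stmt10.mu 𝔞 (Projectivization.mk ℂ u hu) = α := by
  rw [mu_mk]
  funext β
  rw [h β, inner_smul_left]
  have : ((starRingEnd ℂ) (α β : ℂ) * inner ℂ u u).re = α β * ‖u‖ ^ 2 := by
    rw [Complex.conj_ofReal, Complex.re_ofReal_mul]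
    congr 1
    have := inner_self_eq_norm_sq (𝕜 := ℂ) u
    rwa [RCLike.re_to_complex] at this
  rw [this, mul_div_assoc, div_self, mul_one]
  exact pow_ne_zero _ (norm_ne_zero_iff.mpr hu)

lemma exists_eigenbasis [FiniteDimensional ℂ V] (𝔞 : Submodule ℝ (V →L[ℂ] V))
    (hsa : ∀ β ∈ 𝔞, IsSelfAdjoint β)
    (hcomm : ∀ β ∈ 𝔞, ∀ γ ∈ 𝔞, Commute β γ) :
    ∃ (e : OrthonormalBasis (Fin (finrank ℂ V)) ℂ V) (w : Fin (finrank ℂ V) → (𝔞 → ℝ)),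
      ∀ (j : Fin (finrank ℂ V)) (β : 𝔞),
        (β : V →L[ℂ] V) (e j) = ((w j β : ℝ) : ℂ) • e j := by
  classical
  set m := finrank ℝ 𝔞 with hm
  set b : Basis (Fin m) ℝ 𝔞 := finBasis ℝ 𝔞 with hb
  set T : Fin m → Module.End ℂ V := fun i => ((b i : V →L[ℂ] V) : V →ₗ[ℂ] V) with hT
  have hTsym : ∀ i, (T i).IsSymmetric := fun i =>
    ContinuousLinearMap.isSelfAdjoint_iff_isSymmetric.mp (hsa _ (b i).2)
  have hTcomm : Pairwise (Function.onFun Commute T) := by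
    intro i j _
    have h := hcomm (b i) (b i).2 (b j) (b j).2
    show T i * T j = T j * T i
    ext x
    have := DFunLike.congr_fun h x
    simpa [hT, ContinuousLinearMap.mul_apply] using this
  set E : (Fin m → ℂ) → Submodule ℂ V := fun χ => ⨅ i, Module.End.eigenspace (T i) (χ i) with hE
  have htop : ⨆ χ, E χ = ⊤ := LinearMap.IsSymmetric.iSup_iInf_eq_top_of_commute hTsym hTcomm
  have horth : OrthogonalFamily ℂ (fun χ : Fin m → ℂ => E χ) (fun χ => (E χ).subtypeₗᵢ) :=
    LinearMap.IsSymmetric.orthogonalFamily_iInf_eigenspaces hTsym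
  have hSfin : {χ : Fin m → ℂ | E χ ≠ ⊥}.Finite :=
    Submodule.finite_ne_bot_of_iSupIndep horth.independent
  set S := {χ : Fin m → ℂ | E χ ≠ ⊥} with hS
  haveI : Fintype S := hSfin.fintype
  have horth' : OrthogonalFamily ℂ (fun χ : S => E χ) (fun χ => (E (χ : Fin m → ℂ)).subtypeₗᵢ) :=
    horth.comp Subtype.val_injective
  have hsup' : ⨆ χ : S, E (χ : Fin m → ℂ) = ⊤ := by
    rw [show (⨆ χ : S, E (χ : Fin m → ℂ)) = ⨆ χ, E χ from iSup_ne_bot_subtype E, htop]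
  have hint : DirectSum.IsInternal (fun χ : S => E (χ : Fin m → ℂ)) := by
    rw [horth'.isInternal_iff]
    rw [hsup', Submodule.top_orthogonal_eq_bot]
  set e : OrthonormalBasis (Fin (finrank ℂ V)) ℂ V :=
    hint.subordinateOrthonormalBasis rfl horth' with he
  set σ : Fin (finrank ℂ V) → S := fun j => hint.subordinateOrthonormalBasisIndex rfl j horth'
    with hσ
  have hesub : ∀ j, e j ∈ E ((σ j : Fin m → ℂ)) := fun j =>
    hint.subordinateOrthonormalBasis_subordinate rfl j horth'
  have heig : ∀ j i, T i (e j) = ((σ j : Fin m → ℂ) i) • e j := by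
    intro j i
    have := hesub j
    rw [hE] at this
    exact Module.End.mem_eigenspace_iff.mp (Submodule.mem_iInf _ |>.mp this i)
  -- each e j is a joint eigenvector for every β ∈ 𝔞
  have hmain : ∀ (j : Fin (finrank ℂ V)) (β : 𝔞), ∃ μ : ℂ,
      (β : V →L[ℂ] V) (e j) = μ • e j := by
    intro j β
    refine ⟨∑ i, (b.repr β i : ℂ) * (σ j : Fin m → ℂ) i, ?_⟩
    have hrepr : β = ∑ i, b.repr β i • b i := (b.sum_repr β).symm
    have hcoe : (β : V →L[ℂ] V) = ∑ i, b.repr β i • (b i : V →L[ℂ] V) := by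
      conv_lhs => rw [hrepr]
      push_cast [Submodule.coe_sum]
      rfl
    rw [hcoe]
    rw [ContinuousLinearMap.sum_apply]
    rw [Finset.sum_smul]
    refine Finset.sum_congr rfl fun i _ => ?_
    rw [ContinuousLinearMap.smul_apply]
    have : (b i : V →L[ℂ] V) (e j) = ((σ j : Fin m → ℂ) i) • e j := heig j i
    rw [this, ← Complex.coe_smul, smul_smul]
  refine ⟨e, fun j β => (inner ℂ ((β : V →L[ℂ] V) (e j)) (e j) : ℂ).re, ?_⟩
  intro j β
  obtain ⟨μ, hμ⟩ := hmain j β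
  have hinner : (inner ℂ (e j) (e j) : ℂ) = 1 := by
    have h1 : ‖e j‖ = 1 := e.orthonormal.1 j
    rw [inner_self_eq_norm_sq_to_K, h1]
    norm_num
  have hconj : (starRingEnd ℂ) μ = μ := by
    have hsym := ContinuousLinearMap.isSelfAdjoint_iff_isSymmetric.mp (hsa _ β.2)
    have := hsym (e j) (e j)
    rw [ContinuousLinearMap.coe_coe, hμ, inner_smul_left, inner_smul_right, hinner] at this
    simpa using this
  have hre : (inner ℂ ((β : V →L[ℂ] V) (e j)) (e j) : ℂ) = μ := by
    rw [hμ, inner_smul_left, hinner, mul_one, hconj]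
  conv_lhs => rw [hμ]
  show μ • e j = ((inner ℂ ((β : V →L[ℂ] V) (e j)) (e j) : ℂ).re : ℂ) • e j
  rw [hre]
  congr 1
  exact (Complex.conj_eq_iff_re.mp hconj).symm

lemma norm_sq_eq_sum_normSq {n : ℕ} (e : OrthonormalBasis (Fin n) ℂ V) (v : V) :
    ‖v‖ ^ 2 = ∑ k, Complex.normSq (e.repr v k) := by
  have h1 : (inner ℂ v v : ℂ) = ∑ k, (Complex.normSq (e.repr v k) : ℂ) := by
    rw [← e.repr.inner_map_map v v, PiLp.inner_apply]
    refine Finset.sum_congr rfl fun k _ => ?_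
    rw [RCLike.inner_apply, mul_comm, ← Complex.normSq_eq_conj_mul_self]
  have h2 := inner_self_eq_norm_sq (𝕜 := ℂ) v
  rw [RCLike.re_to_complex] at h2
  rw [← h2, h1, ← Complex.ofReal_sum, Complex.ofReal_re]

lemma mu_sum (𝔞 : Submodule ℝ (V →L[ℂ] V)) {n : ℕ} (e : OrthonormalBasis (Fin n) ℂ V)
    (w : Fin n → (𝔞 → ℝ))
    (hw : ∀ (j : Fin n) (β : 𝔞), (β : V →L[ℂ] V) (e j) = ((w j β : ℝ) : ℂ) • e j)
    (v : V) (hv : v ≠ 0) :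
    stmt10.mu 𝔞 (Projectivization.mk ℂ v hv) =
      ∑ k, (Complex.normSq (e.repr v k) / ‖v‖ ^ 2) • w k := by
  rw [mu_mk]
  funext β
  rw [Finset.sum_apply]
  have hv' : (β : V →L[ℂ] V) v = ∑ k, (e.repr v k * (w k β : ℂ)) • e k := by
    conv_lhs => rw [← e.sum_repr v]
    rw [map_sum]
    exact Finset.sum_congr rfl fun k _ => by
      rw [map_smul, hw, smul_smul]
  have hinner : (inner ℂ ((β : V →L[ℂ] V) v) v : ℂ)
      = ((∑ k, w k β * Complex.normSq (e.repr v k) : ℝ) : ℂ) := by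
    rw [hv', sum_inner, Complex.ofReal_sum]
    refine Finset.sum_congr rfl fun k _ => ?_
    rw [inner_smul_left, ← OrthonormalBasis.repr_apply_apply, map_mul, Complex.conj_ofReal,
      Complex.ofReal_mul, mul_comm ((starRingEnd ℂ) (e.repr v k)) _, mul_assoc,
      ← Complex.normSq_eq_conj_mul_self]
  rw [hinner, Complex.ofReal_re, Finset.sum_div]
  refine Finset.sum_congr rfl fun k _ => ?_
  rw [Pi.smul_apply, smul_eq_mul]
  ring

lemma range_mu_eq (𝔞 : Submodule ℝ (V →L[ℂ] V)) {n : ℕ} (e : OrthonormalBasis (Fin n) ℂ V)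
    (w : Fin n → (𝔞 → ℝ))
    (hw : ∀ (j : Fin n) (β : 𝔞), (β : V →L[ℂ] V) (e j) = ((w j β : ℝ) : ℂ) • e j) :
    Set.range (stmt10.mu 𝔞) = convexHull ℝ (Set.range w) := by
  classical
  apply Set.Subset.antisymm
  · rintro x ⟨p, rfl⟩
    have h0 : ‖p.rep‖ ^ 2 ≠ 0 := pow_ne_zero _ (norm_ne_zero_iff.mpr p.rep_nonzero)
    have := mu_sum 𝔞 e w hw p.rep p.rep_nonzero
    rw [Projectivization.mk_rep] at this
    rw [this]
    refine (convex_convexHull ℝ _).sum_mem (fun k _ => ?_) ?_ (fun k _ => subset_convexHull ℝ _ (Set.mem_range_self k))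
    · exact div_nonneg (Complex.normSq_nonneg _) (pow_nonneg (norm_nonneg _) 2)
    · rw [← Finset.sum_div, ← norm_sq_eq_sum_normSq e, div_self h0]
  · intro x hx
    rw [convexHull_eq] at hx
    obtain ⟨ι, t, cw, z, h0, h1, hz, hcm⟩ := hx
    choose jf hjf using hz
    obtain ⟨i0, hi0⟩ := Finset.nonempty_of_sum_ne_zero (h1.trans_ne one_ne_zero)
    set j : ι → Fin n := fun i => if hi : i ∈ t then jf i hi else jf i0 hi0 with hj
    have hwj : ∀ i ∈ t, w (j i) = z i := fun i hi => by rw [hj]; simp only [dif_pos hi]; exact hjf i hi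
    set t' : Fin n → ℝ := fun k => ∑ i ∈ t.filter (fun i => j i = k), cw i with ht'
    have ht0 : ∀ k, 0 ≤ t' k :=
      fun k => Finset.sum_nonneg fun i hi => h0 i (Finset.mem_filter.mp hi).1
    have hsum1 : ∑ k, t' k = 1 := by
      rw [ht']
      rw [Finset.sum_fiberwise_of_maps_to (fun i _ => Finset.mem_univ (j i)) cw]
      exact h1
    have hxeq : ∑ k, t' k • w k = x := by
      have e1 : ∀ k : Fin n, t' k • w k = ∑ i ∈ t.filter (fun i => j i = k), cw i • w k := by
        intro k; rw [ht']; exact Finset.sum_smul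
      rw [Finset.sum_congr rfl fun k _ => e1 k]
      have e2 : ∀ k : Fin n, ∑ i ∈ t.filter (fun i => j i = k), cw i • w k
          = ∑ i ∈ t.filter (fun i => j i = k), cw i • z i := by
        intro k
        refine Finset.sum_congr rfl fun i hi => ?_
        obtain ⟨hit, hjk⟩ := Finset.mem_filter.mp hi
        rw [← hjk, hwj i hit]
      rw [Finset.sum_congr rfl fun k _ => e2 k,
        Finset.sum_fiberwise_of_maps_to (fun i _ => Finset.mem_univ (j i))]
      rw [← Finset.centerMass_eq_of_sum_1 _ _ h1]
      exact hcm
    set v : V := ∑ k, ((Real.sqrt (t' k) : ℝ) : ℂ) • e k with hvdef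
    have hrepr : ∀ k, e.repr v k = ((Real.sqrt (t' k) : ℝ) : ℂ) := by
      intro k
      rw [e.repr_apply_apply, hvdef, e.orthonormal.inner_right_fintype]
    have hnorm : ‖v‖ ^ 2 = 1 := by
      rw [norm_sq_eq_sum_normSq e v]
      rw [Finset.sum_congr rfl fun k _ => by
        rw [hrepr k, Complex.normSq_ofReal, Real.mul_self_sqrt (ht0 k)]]
      exact hsum1
    have hv : v ≠ 0 := by
      intro h
      rw [h, norm_zero] at hnorm
      norm_num at hnorm
    refine ⟨Projectivization.mk ℂ v hv, ?_⟩
    rw [mu_sum 𝔞 e w hw v hv, hnorm]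
    rw [Finset.sum_congr rfl fun k _ => by
      rw [hrepr k, Complex.normSq_ofReal, Real.mul_self_sqrt (ht0 k), div_one]]
    exact hxeq

lemma extreme_weight_mem [FiniteDimensional ℂ V] (𝔞 : Submodule ℝ (V →L[ℂ] V))
    (M : Set (Projectivization ℂ V)) (hMcl : IsClosed M)
    (hfull : Submodule.span ℂ {v : V | ∃ hv : v ≠ 0, Projectivization.mk ℂ v hv ∈ M} = ⊤)
    (hinv : ∀ (v : V) (hv : v ≠ 0), Projectivization.mk ℂ v hv ∈ M → ∀ β : 𝔞,
      ∀ hne : NormedSpace.exp (β : V →L[ℂ] V) v ≠ 0,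
      Projectivization.mk ℂ (NormedSpace.exp (β : V →L[ℂ] V) v) hne ∈ M)
    {n : ℕ} (e : OrthonormalBasis (Fin n) ℂ V) (w : Fin n → (𝔞 → ℝ))
    (hw : ∀ (j : Fin n) (β : 𝔞), (β : V →L[ℂ] V) (e j) = ((w j β : ℝ) : ℂ) • e j)
    (j0 : Fin n) (β : 𝔞) (hβ : ∀ k, w k ≠ w j0 → w k β < w j0 β) :
    w j0 ∈ stmt10.mu 𝔞 '' M := by
  classical
  set α := w j0 with hα
  -- find a representative of M with nonzero component in the α-weight space
  have hex : ∃ (v : V) (hv : v ≠ 0), Projectivization.mk ℂ v hv ∈ M ∧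
      ∃ k, w k = α ∧ e.repr v k ≠ 0 := by
    by_contra hcon
    push_neg at hcon
    have hsub : {v : V | ∃ hv : v ≠ 0, Projectivization.mk ℂ v hv ∈ M} ⊆
        ((LinearMap.ker ((innerSL ℂ (e j0)) : V →ₗ[ℂ] ℂ) : Submodule ℂ V) : Set V) := by
      rintro v ⟨hv, hvM⟩
      have := hcon v hv hvM j0 rfl
      rw [e.repr_apply_apply] at this
      simpa [LinearMap.mem_ker] using this
    have hle := Submodule.span_le.mpr hsub
    rw [hfull, top_le_iff] at hle
    have : e j0 ∈ LinearMap.ker ((innerSL ℂ (e j0)) : V →ₗ[ℂ] ℂ) := hle ▸ Submodule.mem_top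
    rw [LinearMap.mem_ker] at this
    have h1 : (inner ℂ (e j0) (e j0) : ℂ) = 0 := this
    rw [inner_self_eq_norm_sq_to_K, e.orthonormal.1 j0] at h1
    norm_num at h1
  obtain ⟨v, hv, hvM, k0, hk0, hk0ne⟩ := hex
  -- the limit vector
  set u : V := ∑ k ∈ Finset.univ.filter (fun k => w k = α), e.repr v k • e k with hu
  have hu_ne : u ≠ 0 := by
    intro h
    have h1 : (inner ℂ (e k0) u : ℂ) = e.repr v k0 := by
      rw [hu]
      exact e.orthonormal.inner_right_sum _ (Finset.mem_filter.mpr ⟨Finset.mem_univ _, hk0⟩)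
    rw [h, inner_zero_right] at h1
    exact hk0ne h1.symm
  have heigu : ∀ γ : 𝔞, (γ : V →L[ℂ] V) u = ((α γ : ℝ) : ℂ) • u := by
    intro γ
    rw [hu, map_sum, Finset.smul_sum]
    refine Finset.sum_congr rfl fun k hk => ?_
    have hkα : w k = α := (Finset.mem_filter.mp hk).2
    rw [map_smul, hw k γ, hkα, smul_comm]
  -- the flow curve
  set g : ℝ → V := fun t => NormedSpace.exp (((t • β : 𝔞) : V →L[ℂ] V)) v with hg
  have hg_ne : ∀ t, g t ≠ 0 := fun t => stmt10.exp_apply_ne_zero _ v hv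
  have hgM : ∀ t, Projectivization.mk ℂ (g t) (hg_ne t) ∈ M := fun t =>
    hinv v hv hvM (t • β) (hg_ne t)
  set c : ℝ → V := fun t => Real.exp (-(t * α β)) • g t with hc
  have hc_ne : ∀ t, c t ≠ 0 := fun t =>
    smul_ne_zero (Real.exp_ne_zero _) (hg_ne t)
  have hmkc : ∀ t, Projectivization.mk ℂ (c t) (hc_ne t) = Projectivization.mk ℂ (g t) (hg_ne t) := by
    intro t
    rw [Projectivization.mk_eq_mk_iff]
    refine ⟨Units.mk0 ((Real.exp (-(t * α β)) : ℝ) : ℂ) (by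
      exact_mod_cast Real.exp_ne_zero _), ?_⟩
    rw [Units.smul_def, Units.val_mk0, Complex.coe_smul]
  -- explicit formula for the curve
  have hgek : ∀ t k, NormedSpace.exp (((t • β : 𝔞) : V →L[ℂ] V)) (e k)
      = Real.exp (t * w k β) • e k := by
    intro t k
    apply exp_apply_eigen
    rw [Submodule.coe_smul, ContinuousLinearMap.smul_apply, hw k β, ← Complex.coe_smul,
      smul_smul, ← Complex.ofReal_mul, Complex.coe_smul]
  have hgt : ∀ t, g t = ∑ k, e.repr v k • Real.exp (t * w k β) • e k := by
    intro t
    show NormedSpace.exp (((t • β : 𝔞) : V →L[ℂ] V)) v = _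
    conv_lhs => rw [show v = ∑ k, e.repr v k • e k from (e.sum_repr v).symm]
    rw [map_sum]
    exact Finset.sum_congr rfl fun k _ => by rw [map_smul, hgek t k]
  have hcF : ∀ t, c t = ∑ k, Real.exp (t * (w k β - α β)) • (e.repr v k • e k) := by
    intro t
    show Real.exp (-(t * α β)) • g t = _
    rw [hgt t, Finset.smul_sum]
    refine Finset.sum_congr rfl fun k _ => ?_
    rw [smul_comm (Real.exp (-(t * α β))) (e.repr v k), smul_smul, ← Real.exp_add,
      smul_comm (e.repr v k)]
    congr 2
    ring
  -- convergence to u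
  have htendc : Filter.Tendsto c Filter.atTop (nhds u) := by
    have hueq : u = ∑ k, (if w k = α then e.repr v k • e k else 0) := by
      rw [hu, Finset.sum_filter]
    rw [hueq]
    have hterm : ∀ k : Fin n, Filter.Tendsto (fun t => Real.exp (t * (w k β - α β)) • (e.repr v k • e k))
        Filter.atTop (nhds (if w k = α then e.repr v k • e k else 0)) := by
      intro k
      by_cases hk : w k = α
      · have h0 : w k β - α β = 0 := by rw [hk, sub_self]
        rw [if_pos hk]
        simpa [h0] using tendsto_const_nhds (α := ℝ) (f := fun t : ℝ => t)
      · have hd : w k β - α β < 0 := sub_neg.mpr (hβ k hk)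
        rw [if_neg hk]
        have h1 : Filter.Tendsto (fun t : ℝ => t * (w k β - α β)) Filter.atTop Filter.atBot :=
          Filter.Tendsto.atTop_mul_const_of_neg hd Filter.tendsto_id
        have h2 := Real.tendsto_exp_atBot.comp h1
        have h3 := h2.smul_const (e.repr v k • e k)
        simpa using h3
    have := tendsto_finset_sum Finset.univ (fun k _ => hterm k)
    refine Filter.Tendsto.congr (fun t => (hcF t).symm) this
  -- convergence in projective space
  have hsubt : Filter.Tendsto (fun t => (⟨c t, hc_ne t⟩ : {x : V // x ≠ 0}))
      Filter.atTop (nhds ⟨u, hu_ne⟩) := by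
    rw [tendsto_subtype_rng]
    exact htendc
  have htendmk : Filter.Tendsto (fun t => Projectivization.mk ℂ (c t) (hc_ne t))
      Filter.atTop (nhds (Projectivization.mk ℂ u hu_ne)) :=
    (continuous_quotient_mk'.tendsto _).comp hsubt
  have humem : Projectivization.mk ℂ u hu_ne ∈ M := by
    refine hMcl.mem_of_tendsto htendmk (Filter.Eventually.of_forall fun t => ?_)
    rw [hmkc t]
    exact hgM t
  exact ⟨Projectivization.mk ℂ u hu_ne, humem, mu_eigen 𝔞 u hu_ne α heigu⟩

/-- The submodule of linear functions `D → ℝ`. -/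
def linSub (D : Type*) [AddCommGroup D] [Module ℝ D] : Submodule ℝ (D → ℝ) where
  carrier := {f | IsLinearMap ℝ f}
  add_mem' := fun hf hg => ⟨fun x y => by
      simp only [Pi.add_apply, hf.map_add, hg.map_add]; ring,
    fun c x => by simp only [Pi.add_apply, hf.map_smul, hg.map_smul, smul_eq_mul]; ring⟩
  zero_mem' := ⟨fun x y => by simp, fun c x => by simp⟩
  smul_mem' := fun c f hf => ⟨fun x y => by
      simp only [Pi.smul_apply, hf.map_add, smul_eq_mul]; ring,
    fun r x => by simp only [Pi.smul_apply, hf.map_smul, smul_eq_mul]; ring⟩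

lemma key_convex {D : Type*} [AddCommGroup D] [Module ℝ D] {m n : ℕ}
    (b : Basis (Fin m) ℝ D) (w : Fin n → (D → ℝ)) (hlin : ∀ k, IsLinearMap ℝ (w k))
    (B : Set (D → ℝ)) (hBconv : Convex ℝ B) (hBsub : B ⊆ convexHull ℝ (Set.range w))
    (hprod : ∀ (j0 : Fin n) (β : D), (∀ k, w k ≠ w j0 → w k β < w j0 β) → w j0 ∈ B) :
    convexHull ℝ (Set.range w) ⊆ B := by
  classical
  set L := linSub D with hL
  have hwL : ∀ k, w k ∈ L := hlin
  set Λ : (D → ℝ) →ₗ[ℝ] (Fin m → ℝ) := LinearMap.funLeft ℝ ℝ b with hΛ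
  have hinj : ∀ x ∈ L, ∀ y ∈ L, Λ x = Λ y → x = y := by
    intro x hx y hy hxy
    have hX : x = ⇑(IsLinearMap.mk' x hx) := rfl
    have hY : y = ⇑(IsLinearMap.mk' y hy) := rfl
    have heq : IsLinearMap.mk' x hx = IsLinearMap.mk' y hy :=
      Basis.ext b fun i => congrFun hxy i
    rw [hX, hY]
    exact congrArg (fun g : D →ₗ[ℝ] ℝ => ⇑g) heq
  have hKL : convexHull ℝ (Set.range w) ⊆ (L : Set (D → ℝ)) :=
    convexHull_min (Set.range_subset_iff.mpr hwL) L.convex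
  -- image objects
  set W' : Fin n → (Fin m → ℝ) := fun k => Λ (w k) with hW'
  have hrange : Λ '' Set.range w = Set.range W' := by
    rw [hW', ← Set.range_comp]; rfl
  set K' : Set (Fin m → ℝ) := convexHull ℝ (Set.range W') with hK'
  have hKim : Λ '' (convexHull ℝ (Set.range w)) = K' := by
    rw [Λ.image_convexHull, hrange]
  -- extreme points of K' are in the image of B
  have hext : Set.extremePoints ℝ K' ⊆ Λ '' B := by
    intro A hA
    obtain ⟨j0, hj0⟩ := Set.mem_range.mp (extremePoints_convexHull_subset hA)
    have hAnot : A ∉ convexHull ℝ (Set.range W' \ {A}) := by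
      have h1 := ((convex_convexHull ℝ (Set.range W')).mem_extremePoints_iff_mem_diff_convexHull_diff).mp hA
      intro hmem
      exact h1.2 (convexHull_mono (Set.diff_subset_diff_left (subset_convexHull ℝ _)) hmem)
    set C := convexHull ℝ (Set.range W' \ {A}) with hC
    have hCc : Convex ℝ C := convex_convexHull ℝ _
    have hCcl : IsClosed C :=
      (((Set.finite_range W').diff (t := {A})).isCompact_convexHull ℝ).isClosed
    obtain ⟨f, u, hfu, hfA⟩ := geometric_hahn_banach_closed_point hCc hCcl hAnot
    set β : D := ∑ i, f (Pi.single i 1) • b i with hβ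
    have hfΛ : ∀ x, x ∈ L → f (Λ x) = x β := by
      intro x hx
      set X := IsLinearMap.mk' x hx with hXdef
      have h1 : x β = ∑ i, f (Pi.single i 1) * x (b i) := by
        show X β = _
        rw [hβ, map_sum]
        exact Finset.sum_congr rfl fun i _ => by rw [map_smul, smul_eq_mul]; rfl
      have h2 : Λ x = ∑ i, Pi.single i (x (b i)) :=
        (Finset.univ_sum_single (fun i => x (b i))).symm
      rw [h1, h2, map_sum]
      refine Finset.sum_congr rfl fun i _ => ?_
      have h4 : Pi.single i (x (b i)) = x (b i) • (Pi.single i (1 : ℝ) : Fin m → ℝ) := by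
        rw [← Pi.single_smul, smul_eq_mul, mul_one]
      rw [h4, map_smul, smul_eq_mul, mul_comm]
    have hsep : ∀ k, w k ≠ w j0 → w k β < w j0 β := by
      intro k hk
      have hne : W' k ≠ A := by
        intro h
        exact hk (hinj _ (hwL k) _ (hwL j0) (by rw [← hj0] at h; exact h))
      have hmem : W' k ∈ C := subset_convexHull ℝ _ ⟨Set.mem_range_self k, hne⟩
      have h1 := hfu _ hmem
      have h2 : u < f (W' j0) := by rw [hj0]; exact hfA
      have h3 := h1.trans h2
      rw [hfΛ _ (hwL k), hfΛ _ (hwL j0)] at h3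
      exact h3
    exact ⟨w j0, hprod j0 β hsep, hj0⟩
  -- Krein-Milman in finite dimensions
  have hKcomp : IsCompact K' := (Set.finite_range W').isCompact_convexHull ℝ
  have hKM : closure (convexHull ℝ (Set.extremePoints ℝ K')) = K' :=
    closure_convexHull_extremePoints hKcomp (convex_convexHull ℝ _)
  have hextfin : (Set.extremePoints ℝ K').Finite :=
    (Set.finite_range W').subset extremePoints_convexHull_subset
  have hclosed : IsClosed (convexHull ℝ (Set.extremePoints ℝ K')) :=
    (hextfin.isCompact_convexHull ℝ).isClosed
  have hK'eq : K' = convexHull ℝ (Set.extremePoints ℝ K') := by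
    conv_lhs => rw [← hKM]
    rw [hclosed.closure_eq]
  have hK'B : K' ⊆ Λ '' B := by
    rw [hK'eq]
    exact convexHull_min hext (hBconv.linear_image Λ)
  -- pull back
  intro x hx
  have h1 : Λ x ∈ K' := by rw [← hKim]; exact Set.mem_image_of_mem _ hx
  obtain ⟨y, hyB, hyx⟩ := hK'B h1
  have hyL : y ∈ L := hKL (hBsub hyB)
  have hxL : x ∈ L := hKL hx
  rwa [hinj _ hyL _ hxL hyx] at hyB


end stmt10aux

/-- Let `𝔞` be a real vector space of pairwise commuting self-adjoint
endomorphisms of a finite-dimensional complex inner product space `V`, and let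
`μ_𝔞 : ℙ(V) → 𝔞*` be given by `μ_𝔞([v])(β) = Re⟨βv, v⟩/‖v‖²`.  Let `M ⊆ ℙ(V)` be a closed
full subset invariant under `[v] ↦ [exp(β)v]` for every `β ∈ 𝔞`.  If `μ_𝔞(M)` is convex,
then `μ_𝔞(M) = μ_𝔞(ℙ(V))`. -/


theorem stmt_10 {V : Type*} [NormedAddCommGroup V] [InnerProductSpace ℂ V]
    [FiniteDimensional ℂ V] (𝔞 : Submodule ℝ (V →L[ℂ] V))
    (hsa : ∀ β ∈ 𝔞, IsSelfAdjoint β)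
    (hcomm : ∀ β ∈ 𝔞, ∀ γ ∈ 𝔞, Commute β γ)
    (M : Set (ℙ ℂ V)) (hMcl : IsClosed M)
    (hfull : Submodule.span ℂ {v : V | ∃ hv : v ≠ 0, Projectivization.mk ℂ v hv ∈ M} = ⊤)
    (hinv : ∀ (v : V) (hv : v ≠ 0), Projectivization.mk ℂ v hv ∈ M → ∀ β : 𝔞,
      Projectivization.mk ℂ (NormedSpace.exp (β : V →L[ℂ] V) v)
        (stmt10.exp_apply_ne_zero (β : V →L[ℂ] V) v hv) ∈ M)
    (hconv : Convex ℝ (stmt10.mu 𝔞 '' M)) :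
    stmt10.mu 𝔞 '' M = Set.range (stmt10.mu 𝔞) := by
  classical
  obtain ⟨e, w, hw⟩ := stmt10aux.exists_eigenbasis 𝔞 hsa hcomm
  have hrange : Set.range (stmt10.mu 𝔞) = convexHull ℝ (Set.range w) :=
    stmt10aux.range_mu_eq 𝔞 e w hw
  have himsub : stmt10.mu 𝔞 '' M ⊆ Set.range (stmt10.mu 𝔞) := Set.image_subset_range _ _
  apply Set.Subset.antisymm himsub
  rw [hrange]
  have hlin : ∀ k, IsLinearMap ℝ (w k) := by
    intro k
    have hek : e k ≠ 0 := e.orthonormal.ne_zero k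
    have hcan : ∀ (a b : ℝ), ((a : ℝ) : ℂ) • e k = ((b : ℝ) : ℂ) • e k → a = b := by
      intro a b h
      have h2 : (((a : ℝ) : ℂ) - ((b : ℝ) : ℂ)) • e k = 0 := by
        rw [sub_smul, h, sub_self]
      rcases smul_eq_zero.mp h2 with h3 | h3
      · have := sub_eq_zero.mp h3
        exact_mod_cast this
      · exact absurd h3 hek
    constructor
    · intro β γ
      apply hcan
      rw [← hw k (β + γ), Complex.ofReal_add, add_smul, ← hw k β, ← hw k γ,
        Submodule.coe_add, ContinuousLinearMap.add_apply]
    · intro r β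
      apply hcan
      rw [← hw k (r • β), Submodule.coe_smul, ContinuousLinearMap.smul_apply, hw k β,
        smul_eq_mul, Complex.ofReal_mul, mul_smul]
      exact (Complex.coe_smul r _).symm
  refine stmt10aux.key_convex (Module.finBasis ℝ 𝔞) w hlin (stmt10.mu 𝔞 '' M) hconv ?_ ?_
  · rw [← hrange]; exact himsub
  · intro j0 β hβ
    exact stmt10aux.extreme_weight_mem 𝔞 M hMcl hfull
      (fun v hv hm γ hne => hinv v hv hm γ) e w hw j0 β hβ
end

section
/- Let V be a finite-dimensional complex inner product space and β a self-adjoint endomorphism of V with distinct eigenvalues λ₁ > λ₂ > ⋯ > λ_k, eigenspaces V₁, …, V_k and orthogonal projections P_i : V → V onto V_i. Let v ∈ V be nonzero and let j be the smallest index with P_j v ≠ 0. Then in the projective space ℙ(V) one has lim_{t → +∞} [exp(tβ)v] = [P_j v]. In particular, if P₁v ≠ 0 then the flow carries [v] to [P₁v] ∈ ℙ(V₁). -/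
open scoped LinearAlgebra.Projectivization

noncomputable instance stmt11.instTop (V : Type*) [NormedAddCommGroup V]
    [InnerProductSpace ℂ V] : TopologicalSpace (ℙ ℂ V) :=
  instTopologicalSpaceQuotient

lemma stmt11.exp_apply_ne_zero {V : Type*} [NormedAddCommGroup V] [InnerProductSpace ℂ V]
    [FiniteDimensional ℂ V] (A : V →L[ℂ] V) (v : V) (hv : v ≠ 0) :
    NormedSpace.exp A v ≠ 0 := by
  intro h
  letI : NormedAlgebra ℚ (V →L[ℂ] V) := NormedAlgebra.restrictScalars ℚ ℂ (V →L[ℂ] V)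
  have h1 : NormedSpace.exp (-A) * NormedSpace.exp A = 1 := by
    rw [← NormedSpace.exp_add_of_commute (Commute.neg_left (Commute.refl A)),
      neg_add_cancel, NormedSpace.exp_zero]
  have h2 : NormedSpace.exp (-A) (NormedSpace.exp A v) = v := by
    have := congrArg (fun f : V →L[ℂ] V => f v) h1
    simpa using this
  rw [h] at h2
  simp at h2
  exact hv h2.symm



lemma exp_smul_eig {V : Type*} [NormedAddCommGroup V] [InnerProductSpace ℂ V]
    [FiniteDimensional ℂ V] (β : V →L[ℂ] V) (c : ℝ) (w : V) (hw : β w = (c : ℂ) • w)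
    (t : ℝ) : NormedSpace.exp (t • β) w = Real.exp (t * c) • w := by
  have hwr : β w = c • w := by rw [hw]; simp [Complex.coe_smul]
  have hpow : ∀ n : ℕ, ((t • β) ^ n) w = (t * c) ^ n • w := by
    intro n
    induction n with
    | zero => simp
    | succ n ih =>
      rw [pow_succ', ContinuousLinearMap.mul_apply, ih, ContinuousLinearMap.smul_apply,
        β.map_smul_of_tower, hwr, pow_succ']
      rw [smul_smul, smul_smul]; ring_nf
  have h1 := (NormedSpace.exp_series_hasSum_exp' (𝕂 := ℝ) (t • β)).mapL
    ((ContinuousLinearMap.apply ℂ V w).restrictScalars ℝ)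
  have h2 := (NormedSpace.exp_series_hasSum_exp' (𝕂 := ℝ) (t * c)).smul_const w
  have he : (fun n : ℕ => ((ContinuousLinearMap.apply ℂ V w).restrictScalars ℝ)
      ((n.factorial : ℝ)⁻¹ • (t • β) ^ n)) = fun n : ℕ => ((n.factorial : ℝ)⁻¹ • (t * c) ^ n) • w := by
    funext n
    simp [hpow n, smul_smul]
  rw [he] at h1
  have := h1.unique h2
  simpa [Real.exp_eq_exp_ℝ] using this


/-- Let `β` be a self-adjoint endomorphism of a finite-dimensional complex
inner product space `V` with distinct eigenvalues `λ₁ > ⋯ > λ_k`, eigenspaces `V₁, …, V_k`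
and orthogonal projections `P_i` onto `V_i` (so that `∑ P_i = 1`).  Let `v ≠ 0` and let `j`
be the smallest index with `P_j v ≠ 0`.  Then in `ℙ(V)` one has
`lim_{t → +∞} [exp(tβ)v] = [P_j v]`. -/
theorem stmt_11 {V : Type*} [NormedAddCommGroup V] [InnerProductSpace ℂ V]
    [FiniteDimensional ℂ V] (β : V →L[ℂ] V) (hβ : IsSelfAdjoint β)
    (k : ℕ) (lam : Fin k → ℝ) (hanti : StrictAnti lam)
    (P : Fin k → (V →L[ℂ] V))
    (hP : ∀ i (w : V), P i w =
      (Submodule.orthogonalProjectionOnto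
        (Module.End.eigenspace ((β : V →ₗ[ℂ] V) : Module.End ℂ V) (lam i : ℂ)) w : V))
    (hsum : ∑ i, P i = 1)
    (v : V) (hv : v ≠ 0) (j : Fin k) (hj : P j v ≠ 0) (hmin : ∀ i < j, P i v = 0) :
    Filter.Tendsto
      (fun t : ℝ => Projectivization.mk ℂ (NormedSpace.exp (t • β) v)
        (stmt11.exp_apply_ne_zero (t • β) v hv))
      Filter.atTop (nhds (Projectivization.mk ℂ (P j v) hj)) := by
  classical
  -- eigenvector property
  have heig : ∀ i, β (P i v) = ((lam i : ℂ)) • P i v := by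
    intro i
    have hmem : P i v ∈ Module.End.eigenspace ((β : V →ₗ[ℂ] V) : Module.End ℂ V) (lam i : ℂ) := by
      rw [hP]
      exact (Submodule.orthogonalProjectionOnto _ v).2
    exact Module.End.mem_eigenspace_iff.mp hmem
  have hvsum : v = ∑ i, P i v := by
    have := congrArg (fun f : V →L[ℂ] V => f v) hsum
    simpa using this.symm
  have hexp : ∀ t : ℝ, NormedSpace.exp (t • β) v = ∑ i, Real.exp (t * lam i) • P i v := by
    intro t
    conv_lhs => rw [hvsum, map_sum]
    exact Finset.sum_congr rfl fun i _ => exp_smul_eig β (lam i) (P i v) (heig i) t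
  set u : ℝ → V := fun t => ∑ i, Real.exp (t * (lam i - lam j)) • P i v with hu
  have hu0 : ∀ t, u t = Real.exp (-(t * lam j)) • NormedSpace.exp (t • β) v := by
    intro t
    rw [hexp, Finset.smul_sum]
    refine Finset.sum_congr rfl fun i _ => ?_
    rw [smul_smul, ← Real.exp_add]
    ring_nf
  have hune : ∀ t, u t ≠ 0 := by
    intro t
    rw [hu0]
    exact smul_ne_zero (Real.exp_ne_zero _) (stmt11.exp_apply_ne_zero (t • β) v hv)
  -- projective equality
  have hmk : ∀ t, Projectivization.mk ℂ (NormedSpace.exp (t • β) v)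
      (stmt11.exp_apply_ne_zero (t • β) v hv) = Projectivization.mk ℂ (u t) (hune t) := by
    intro t
    rw [Projectivization.mk_eq_mk_iff']
    refine ⟨(Real.exp (t * lam j) : ℂ), ?_⟩
    rw [hu0 t, Complex.coe_smul, smul_smul, ← Real.exp_add]
    simp
  -- convergence of u
  have hterm : ∀ i : Fin k, Filter.Tendsto (fun t : ℝ => Real.exp (t * (lam i - lam j)) • P i v)
      Filter.atTop (nhds (if i = j then P j v else 0)) := by
    intro i
    rcases lt_trichotomy i j with hij | hij | hij
    · simp [hmin i hij, if_neg hij.ne]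
    · subst hij
      simp only [if_pos rfl, sub_self, mul_zero, Real.exp_zero, one_smul]
      exact tendsto_const_nhds
    · rw [if_neg hij.ne']
      have hlt : lam i - lam j < 0 := sub_neg.mpr (hanti hij)
      have h1 : Filter.Tendsto (fun t : ℝ => t * (lam i - lam j)) Filter.atTop Filter.atBot :=
        Filter.Tendsto.atTop_mul_const_of_neg hlt Filter.tendsto_id
      have h2 := (Real.tendsto_exp_atBot.comp h1).smul_const (P i v)
      simpa using h2
  have hulim : Filter.Tendsto u Filter.atTop (nhds (P j v)) := by
    have := tendsto_finset_sum Finset.univ (fun i _ => hterm i)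
    simpa using this
  -- lift to the subtype and quotient
  have hsub : Filter.Tendsto (fun t => (⟨u t, hune t⟩ : {x : V // x ≠ 0})) Filter.atTop
      (nhds ⟨P j v, hj⟩) := by
    rw [tendsto_subtype_rng]
    exact hulim
  have hfinal : Filter.Tendsto (fun t => Projectivization.mk ℂ (u t) (hune t)) Filter.atTop
      (nhds (Projectivization.mk ℂ (P j v) hj)) :=
    (continuous_quot_mk.tendsto _).comp hsub
  have hfun : (fun t : ℝ => Projectivization.mk ℂ (NormedSpace.exp (t • β) v)
      (stmt11.exp_apply_ne_zero (t • β) v hv)) = fun t => Projectivization.mk ℂ (u t) (hune t) :=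
    funext hmk
  rw [hfun]
  exact hfinal
end

section
/- Let V be a finite-dimensional complex inner product space and β a self-adjoint endomorphism of V with distinct eigenvalues λ₁ > λ₂ > ⋯ > λ_k, eigenspaces V₁, …, V_k and orthogonal projections P_i onto V_i. For g ∈ End(V), the limit lim_{t → −∞} exp(tβ) g exp(−tβ) exists in End(V) if and only if P_i g P_j = 0 for all pairs i, j with λ_i < λ_j; and in that case the limit equals the block-diagonal part Σ_{i=1}^k P_i g P_i. -/
open NormedSpace Filter

set_option maxHeartbeats 1000000
set_option synthInstance.maxHeartbeats 400000

lemma exp_apply_eigen {V : Type*} [NormedAddCommGroup V] [InnerProductSpace ℂ V]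
    [FiniteDimensional ℂ V] (A : V →L[ℂ] V) (μ : ℂ) (v : V) (h : A v = μ • v) :
    NormedSpace.exp A v = Complex.exp μ • v := by
  have hpow : ∀ n : ℕ, (A ^ n) v = μ ^ n • v := by
    intro n
    induction n with
    | zero => simp
    | succ n ih =>
        rw [pow_succ, ContinuousLinearMap.mul_apply, h, map_smul, ih, smul_smul, ← pow_succ']
  have hs : Summable fun n : ℕ => ((n.factorial : ℂ))⁻¹ • A ^ n :=
    NormedSpace.expSeries_summable' (𝕂 := ℂ) A
  have hsc : Summable fun n : ℕ => ((n.factorial : ℂ))⁻¹ * μ ^ n := by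
    simpa [smul_eq_mul] using NormedSpace.expSeries_summable' (𝕂 := ℂ) μ
  rw [NormedSpace.exp_eq_tsum ℂ]
  have := (ContinuousLinearMap.apply ℂ V v).map_tsum hs
  simp only [ContinuousLinearMap.apply_apply] at this
  rw [this]
  have : ∀ n : ℕ, (((n.factorial : ℂ))⁻¹ • A ^ n) v = (((n.factorial : ℂ))⁻¹ * μ ^ n) • v := by
    intro n
    rw [ContinuousLinearMap.smul_apply, hpow, smul_smul]
  simp only [this]
  rw [hsc.tsum_smul_const]
  congr 1
  rw [Complex.exp_eq_exp_ℂ, NormedSpace.exp_eq_tsum ℂ]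
  simp [smul_eq_mul]

/-- Let `β` be a self-adjoint endomorphism of a finite-dimensional complex
inner product space `V` with distinct eigenvalues `λ₁ > ⋯ > λ_k`, eigenspaces `V₁, …, V_k`
and orthogonal projections `P_i` onto `V_i` (so `∑ P_i = 1`).  For `g ∈ End(V)`, the limit
`lim_{t → −∞} exp(tβ) g exp(−tβ)` exists in `End(V)` if and only if `P_i g P_j = 0`
whenever `λ_i < λ_j`; and in that case the limit equals `∑ i, P_i g P_i`. -/
theorem stmt_12 {V : Type*} [NormedAddCommGroup V] [InnerProductSpace ℂ V]
    [FiniteDimensional ℂ V] (β : V →L[ℂ] V) (hβ : IsSelfAdjoint β)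
    (k : ℕ) (lam : Fin k → ℝ) (hanti : StrictAnti lam)
    (P : Fin k → (V →L[ℂ] V))
    (hP : ∀ i (w : V), P i w =
      (Submodule.orthogonalProjectionOnto
        (Module.End.eigenspace ((β : V →ₗ[ℂ] V) : Module.End ℂ V) (lam i : ℂ)) w : V))
    (hsum : ∑ i, P i = 1) (g : V →L[ℂ] V) :
    ((∃ L : V →L[ℂ] V, Filter.Tendsto
        (fun t : ℝ => NormedSpace.exp (t • β) * g * NormedSpace.exp (-(t • β)))
        Filter.atBot (nhds L)) ↔
      (∀ i j, lam i < lam j → P i * g * P j = 0)) ∧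
    ((∀ i j, lam i < lam j → P i * g * P j = 0) →
      Filter.Tendsto
        (fun t : ℝ => NormedSpace.exp (t • β) * g * NormedSpace.exp (-(t • β)))
        Filter.atBot (nhds (∑ i, P i * g * P i))) := by
  have hsymm : (β : V →ₗ[ℂ] V).IsSymmetric := hβ.isSymmetric
  set T : Module.End ℂ V := (β : V →ₗ[ℂ] V) with hT
  have hlaminj : Function.Injective lam := hanti.injective
  have hmem : ∀ i (w : V), P i w ∈ Module.End.eigenspace T (lam i : ℂ) := by
    intro i w
    rw [hP i w]
    exact Submodule.coe_mem _
  -- orthogonality of distinct projections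
  have horth : ∀ i j, i ≠ j → P i * P j = 0 := by
    intro i j hij
    ext w
    rw [ContinuousLinearMap.mul_apply, ContinuousLinearMap.zero_apply, hP i]
    have hperp : P j w ∈ (Module.End.eigenspace T (lam i : ℂ))ᗮ := by
      intro u hu
      exact hsymm.orthogonalFamily_eigenspaces
        (by exact_mod_cast fun h => hij (hlaminj (by exact_mod_cast h)) :
          (lam i : ℂ) ≠ (lam j : ℂ)) ⟨u, hu⟩ ⟨P j w, hmem j w⟩
    rw [Submodule.orthogonalProjectionOnto_apply_of_mem_orthogonal hperp]
    rfl
  have hidem : ∀ i, P i * P i = P i := by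
    intro i
    ext w
    rw [ContinuousLinearMap.mul_apply, hP i (P i w),
      ← Submodule.starProjection_apply, Submodule.starProjection_eq_self_iff.2 (hmem i w)]
  -- exp acting on projections
  have hexpP : ∀ (s : ℝ) i, NormedSpace.exp (s • β) * P i = Real.exp (s * lam i) • P i := by
    intro s i
    ext w
    rw [ContinuousLinearMap.mul_apply]
    have hb : β (P i w) = (lam i : ℂ) • P i w := Module.End.mem_eigenspace_iff.mp (hmem i w)
    have heig : (s • β) (P i w) = ((s * lam i : ℝ) : ℂ) • P i w := by
      rw [ContinuousLinearMap.smul_apply, hb, Complex.ofReal_mul, mul_smul, Complex.coe_smul, Complex.coe_smul]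
    rw [exp_apply_eigen _ _ _ heig, ← Complex.ofReal_exp, Complex.coe_smul,
      ContinuousLinearMap.smul_apply]
  have hexp : ∀ s : ℝ, NormedSpace.exp (s • β) = ∑ i, Real.exp (s * lam i) • P i := by
    intro s
    calc NormedSpace.exp (s • β) = NormedSpace.exp (s • β) * 1 := (mul_one _).symm
    _ = ∑ i, NormedSpace.exp (s • β) * P i := by rw [← hsum, Finset.mul_sum]
    _ = ∑ i, Real.exp (s * lam i) • P i := by simp only [hexpP]
  have hPexp : ∀ (s : ℝ) i, P i * NormedSpace.exp (s • β) = Real.exp (s * lam i) • P i := by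
    intro s i
    rw [hexp s, Finset.mul_sum]
    rw [Finset.sum_eq_single i]
    · rw [mul_smul_comm, hidem]
    · intro j _ hj
      rw [mul_smul_comm, horth i j (Ne.symm hj), smul_zero]
    · simp
  -- the conjugation identity, termwise
  have hkey : ∀ (t : ℝ) i j,
      NormedSpace.exp (t • β) * (P i * g * P j) * NormedSpace.exp (-(t • β)) =
        Real.exp (t * (lam i - lam j)) • (P i * g * P j) := by
    intro t i j
    have h1 := hexpP t i
    have h2 : P j * NormedSpace.exp (-(t • β)) = Real.exp ((-t) * lam j) • P j := by
      rw [← neg_smul]; exact hPexp (-t) j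
    calc NormedSpace.exp (t • β) * (P i * g * P j) * NormedSpace.exp (-(t • β))
        = (NormedSpace.exp (t • β) * P i) * g * (P j * NormedSpace.exp (-(t • β))) := by
          simp only [mul_assoc]
    _ = (Real.exp (t * lam i) • P i) * g * (Real.exp ((-t) * lam j) • P j) := by
          rw [h1, h2]
    _ = (Real.exp (t * lam i) * Real.exp ((-t) * lam j)) • (P i * g * P j) := by
          simp [smul_mul_assoc, mul_smul_comm, smul_smul, mul_assoc, mul_comm]
    _ = Real.exp (t * (lam i - lam j)) • (P i * g * P j) := by
          rw [← Real.exp_add]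
          ring_nf
  have hconj : ∀ t : ℝ,
      NormedSpace.exp (t • β) * g * NormedSpace.exp (-(t • β)) =
        ∑ i, ∑ j, Real.exp (t * (lam i - lam j)) • (P i * g * P j) := by
    intro t
    have hg : g = ∑ i, ∑ j, P i * g * P j := by
      calc g = (∑ i, P i) * g * (∑ j, P j) := by rw [hsum]; simp
      _ = ∑ i, ∑ j, P i * g * P j := by
          rw [Finset.sum_mul, Finset.sum_mul]
          congr 1; ext i
          rw [Finset.mul_sum]
    conv_lhs => rw [hg]
    rw [Finset.mul_sum, Finset.sum_mul]
    refine Finset.sum_congr rfl fun i _ => ?_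
    rw [Finset.mul_sum, Finset.sum_mul]
    exact Finset.sum_congr rfl fun j _ => hkey t i j
  -- second part: convergence when the lower-triangular blocks vanish
  have hpart2 : (∀ i j, lam i < lam j → P i * g * P j = 0) →
      Filter.Tendsto
        (fun t : ℝ => NormedSpace.exp (t • β) * g * NormedSpace.exp (-(t • β)))
        Filter.atBot (nhds (∑ i, P i * g * P i)) := by
    intro h0
    have hfun : (fun t : ℝ => NormedSpace.exp (t • β) * g * NormedSpace.exp (-(t • β))) =
        fun t => ∑ i, ∑ j, Real.exp (t * (lam i - lam j)) • (P i * g * P j) := funext hconj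
    rw [hfun]
    have hlim : (∑ i, P i * g * P i) =
        ∑ i, ∑ j, (if j = i then P i * g * P i else 0) := by
      refine Finset.sum_congr rfl fun i _ => ?_
      rw [Finset.sum_ite_eq' (Finset.univ) i (fun _ => P i * g * P i)]
      simp
    rw [hlim]
    refine tendsto_finset_sum _ fun i _ => tendsto_finset_sum _ fun j _ => ?_
    rcases eq_or_ne i j with heq | hne
    · subst heq
      simp only [if_pos rfl, sub_self, mul_zero, Real.exp_zero, one_smul]
      exact tendsto_const_nhds
    · rw [if_neg (Ne.symm hne)]
      rcases lt_or_gt_of_ne (fun h => hne (hlaminj h) : lam i ≠ lam j) with hlt | hgt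
      · simp [h0 i j hlt]
      · have hc : (0:ℝ) < lam i - lam j := sub_pos.2 hgt
        have h1 : Tendsto (fun t : ℝ => t * (lam i - lam j)) atBot atBot :=
          Tendsto.atBot_mul_const' hc tendsto_id
        have h2 : Tendsto (fun t : ℝ => Real.exp (t * (lam i - lam j))) atBot (nhds 0) :=
          Real.tendsto_exp_atBot.comp h1
        have := h2.smul_const (P i * g * P j)
        simpa using this
  refine ⟨⟨fun ⟨L, hL⟩ i j hij => ?_, fun h => ⟨_, hpart2 h⟩⟩, hpart2⟩
  -- forward direction
  have hblock : ∀ t : ℝ,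
      P i * (NormedSpace.exp (t • β) * g * NormedSpace.exp (-(t • β))) * P j =
        Real.exp (t * (lam i - lam j)) • (P i * g * P j) := by
    intro t
    have h1 := hPexp t i
    have h2 : NormedSpace.exp (-(t • β)) * P j = Real.exp ((-t) * lam j) • P j := by
      rw [← neg_smul]; exact hexpP (-t) j
    calc P i * (NormedSpace.exp (t • β) * g * NormedSpace.exp (-(t • β))) * P j
        = (P i * NormedSpace.exp (t • β)) * g * (NormedSpace.exp (-(t • β)) * P j) := by
          simp only [mul_assoc]
    _ = (Real.exp (t * lam i) • P i) * g * (Real.exp ((-t) * lam j) • P j) := by rw [h1, h2]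
    _ = (Real.exp (t * lam i) * Real.exp ((-t) * lam j)) • (P i * g * P j) := by
          simp [smul_mul_assoc, mul_smul_comm, smul_smul, mul_assoc, mul_comm]
    _ = Real.exp (t * (lam i - lam j)) • (P i * g * P j) := by
          rw [← Real.exp_add]; ring_nf
  have hconst : ∀ t : ℝ, Real.exp (t * (lam j - lam i)) •
      (P i * (NormedSpace.exp (t • β) * g * NormedSpace.exp (-(t • β))) * P j) =
        P i * g * P j := by
    intro t
    rw [hblock t, smul_smul, ← Real.exp_add]
    have : t * (lam j - lam i) + t * (lam i - lam j) = 0 := by ring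
    rw [this, Real.exp_zero, one_smul]
  -- the scalar tends to 0, the block tends to P i * L * P j, so product tends to 0
  have hc : (0:ℝ) < lam j - lam i := sub_pos.2 hij
  have h1 : Tendsto (fun t : ℝ => t * (lam j - lam i)) atBot atBot :=
    Tendsto.atBot_mul_const' hc tendsto_id
  have h2 : Tendsto (fun t : ℝ => Real.exp (t * (lam j - lam i))) atBot (nhds 0) :=
    Real.tendsto_exp_atBot.comp h1
  have h3 : Tendsto
      (fun t : ℝ => P i * (NormedSpace.exp (t • β) * g * NormedSpace.exp (-(t • β))) * P j)
      atBot (nhds (P i * L * P j)) :=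
    (hL.const_mul (P i)).mul_const (P j)
  have h4 : Tendsto (fun t : ℝ => Real.exp (t * (lam j - lam i)) •
      (P i * (NormedSpace.exp (t • β) * g * NormedSpace.exp (-(t • β))) * P j))
      atBot (nhds ((0:ℝ) • (P i * L * P j))) := h2.smul h3
  rw [zero_smul] at h4
  have h5 : Tendsto (fun _ : ℝ => P i * g * P j) atBot (nhds (0 : V →L[ℂ] V)) := by
    have := h4.congr (fun t => hconst t)
    exact this
  exact tendsto_nhds_unique tendsto_const_nhds h5
end

section
/- Let V be a finite-dimensional complex inner product space, β a self-adjoint endomorphism of V with largest eigenvalue λ₁ and eigenspace W = ker(β − λ₁). If g is an invertible endomorphism of V such that the limit lim_{t → −∞} exp(tβ) g exp(−tβ) exists in End(V), then g(W) = W. -/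
lemma exp_apply_eigvec {V : Type*} [NormedAddCommGroup V] [InnerProductSpace ℂ V]
    [FiniteDimensional ℂ V] (A : V →L[ℂ] V) (c : ℝ) (v : V) (hv : A v = c • v) :
    NormedSpace.exp A v = Real.exp c • v := by
  have hpow : ∀ n : ℕ, (A ^ n) v = (c ^ n) • v := by
    intro n
    induction n with
    | zero => simp
    | succ n ih =>
      rw [pow_succ, ContinuousLinearMap.mul_apply, hv, (A ^ n).map_smul_of_tower, ih,
        smul_smul, pow_succ, mul_comm]
  have hs : Summable fun n : ℕ => (n.factorial⁻¹ : ℝ) • A ^ n :=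
    NormedSpace.expSeries_summable' (𝕂 := ℝ) A
  have hev := ((ContinuousLinearMap.apply ℂ V v).restrictScalars ℝ).map_tsum hs
  simp only [ContinuousLinearMap.coe_restrictScalars', ContinuousLinearMap.apply_apply] at hev
  have hev' : (∑' n : ℕ, (n.factorial⁻¹ : ℝ) • A ^ n) v
      = ∑' n : ℕ, ((n.factorial⁻¹ : ℝ) • A ^ n) v := hev
  rw [NormedSpace.exp_eq_tsum ℝ, hev']
  have h2 : ∀ n : ℕ, ((n.factorial⁻¹ : ℝ) • A ^ n) v = ((n.factorial⁻¹ : ℝ) * c ^ n) • v := by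
    intro n
    simp [hpow n, smul_smul]
  rw [tsum_congr h2, Summable.tsum_smul_const (f := fun n : ℕ => (n.factorial⁻¹ : ℝ) * c ^ n) ?_ v, Real.exp_eq_exp_ℝ, NormedSpace.exp_eq_tsum ℝ]
  · simp [smul_eq_mul]
  · exact NormedSpace.expSeries_summable' (𝕂 := ℝ) c

/-- Let `β` be a self-adjoint endomorphism of a finite-dimensional complex
inner product space `V` with largest eigenvalue `λ₁` and eigenspace `W = ker (β - λ₁)`.
If `g` is an invertible endomorphism of `V` such that `lim_{t → −∞} exp(tβ) g exp(−tβ)`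
exists in `End(V)`, then `g(W) = W`. -/
theorem stmt_13 {V : Type*} [NormedAddCommGroup V] [InnerProductSpace ℂ V]
    [FiniteDimensional ℂ V] (β : V →L[ℂ] V) (hβ : IsSelfAdjoint β) (lam₁ : ℝ)
    (hlam : IsGreatest {μ : ℝ |
      Module.End.HasEigenvalue ((β : V →ₗ[ℂ] V) : Module.End ℂ V) (μ : ℂ)} lam₁)
    (g : (V →L[ℂ] V)ˣ)
    (hg : ∃ L : V →L[ℂ] V, Filter.Tendsto
      (fun t : ℝ =>
        NormedSpace.exp (t • β) * (g : V →L[ℂ] V) * NormedSpace.exp (-(t • β)))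
      Filter.atBot (nhds L)) :
    Submodule.map (((g : V →L[ℂ] V) : V →ₗ[ℂ] V))
        (Module.End.eigenspace ((β : V →ₗ[ℂ] V) : Module.End ℂ V) (lam₁ : ℂ)) =
      Module.End.eigenspace ((β : V →ₗ[ℂ] V) : Module.End ℂ V) (lam₁ : ℂ) := by
  obtain ⟨L, hL⟩ := hg
  have hT : LinearMap.IsSymmetric (β : V →ₗ[ℂ] V) := hβ.isSymmetric
  set T : Module.End ℂ V := ((β : V →ₗ[ℂ] V) : Module.End ℂ V) with hTdef
  set W : Submodule ℂ V := Module.End.eigenspace T (lam₁ : ℂ) with hW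
  -- exp of t•β acts on eigenvectors as scalar
  have hexp_eig : ∀ (t r : ℝ) (x : V), x ∈ Module.End.eigenspace T (r : ℂ) →
      NormedSpace.exp (t • β) x = Real.exp (t * r) • x := by
    intro t r x hx
    apply exp_apply_eigvec
    have hx' : β x = (r : ℂ) • x := Module.End.mem_eigenspace_iff.mp hx
    calc (t • β) x = t • β x := rfl
    _ = t • ((r : ℂ) • x) := by rw [hx']
    _ = (t * r) • x := by rw [Complex.coe_smul, smul_smul]
  -- exp(t•β) is self-adjoint
  have hexp_sa : ∀ t : ℝ, IsSelfAdjoint (NormedSpace.exp (t • β)) :=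
    fun t => (IsSelfAdjoint.smul (star_trivial t) hβ).exp
  -- the complement of W among eigenspaces
  set S : Submodule ℂ V := ⨆ (μ : ℂ) (_ : μ ≠ (lam₁ : ℂ)), Module.End.eigenspace T μ with hS
  -- a criterion for membership in Sᗮ
  have hmem_orth : ∀ x : V,
      (∀ μ : ℂ, μ ≠ (lam₁ : ℂ) → ∀ y ∈ Module.End.eigenspace T μ, (inner ℂ y x : ℂ) = 0) →
      x ∈ Sᗮ := by
    intro x hx
    rw [Submodule.mem_orthogonal]
    intro y hy
    rw [hS, Submodule.iSup_eq_span] at hy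
    induction hy using Submodule.span_induction with
    | mem z hz =>
      obtain ⟨_, ⟨μ, rfl⟩, hz⟩ := hz
      have hz' : z ∈ (⨆ (_ : μ ≠ ((lam₁ : ℂ))), Module.End.eigenspace T μ) := hz
      by_cases hμ : μ = (lam₁ : ℂ)
      · rw [iSup_neg (by simpa using hμ)] at hz'
        rw [Submodule.mem_bot] at hz'
        simp [hz']
      · rw [iSup_pos hμ] at hz'
        exact hx μ hμ z hz'
    | zero => simp
    | add a b _ _ ha hb => rw [inner_add_left, ha, hb, add_zero]
    | smul c a _ ha => rw [inner_smul_left, ha, mul_zero]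
  -- W = Sᗮ
  have htop : (⨆ μ : ℂ, Module.End.eigenspace T μ) = ⊤ := by
    have h := hT.orthogonalComplement_iSup_eigenspaces_eq_bot
    rwa [Submodule.orthogonal_eq_bot_iff] at h
  have hWle : W ≤ Sᗮ := by
    intro x hx
    apply hmem_orth x
    intro μ hμ y hy
    exact hT.orthogonalFamily_eigenspaces hμ ⟨y, hy⟩ ⟨x, hx⟩
  have hsup : W ⊔ S = ⊤ := by
    refine le_antisymm le_top ?_
    rw [← htop]
    refine iSup_le fun μ => ?_
    by_cases hμ : μ = (lam₁ : ℂ)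
    · rw [hμ]; exact le_sup_left
    · exact le_trans (le_iSup_of_le μ (by rw [iSup_pos hμ])) le_sup_right
  have hinf : W ⊓ S = ⊥ := by
    rw [eq_bot_iff]
    rintro x ⟨hx1, hx2⟩
    have hxo : x ∈ Sᗮ := hWle hx1
    have h0 : (inner ℂ x x : ℂ) = 0 := (Submodule.mem_orthogonal S x).mp hxo x hx2
    rw [Submodule.mem_bot]
    exact inner_self_eq_zero.mp h0
  have hdim1 : Module.finrank ℂ W + Module.finrank ℂ S = Module.finrank ℂ V := by
    have h := Submodule.finrank_sup_add_finrank_inf_eq W S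
    rw [hsup, hinf] at h
    simpa [finrank_top] using h.symm
  have hdim2 : Module.finrank ℂ S + Module.finrank ℂ Sᗮ = Module.finrank ℂ V :=
    S.finrank_add_finrank_orthogonal
  have hWS : W = Sᗮ := Submodule.eq_of_le_of_finrank_eq hWle (by omega)
  -- the key analytic fact: g maps W into W
  have hmaps : ∀ v ∈ W, (g : V →L[ℂ] V) v ∈ W := by
    intro v hv
    set u : V := (g : V →L[ℂ] V) v with hu
    rw [hWS]
    apply hmem_orth
    intro μ hμ w hw
    by_cases hw0 : w = 0
    · simp [hw0]
    have heig : Module.End.HasEigenvalue T μ :=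
      Module.End.hasEigenvalue_of_hasEigenvector ⟨hw, hw0⟩
    have hconj : (starRingEnd ℂ) μ = μ := hT.conj_eigenvalue_eq_self heig
    rw [Complex.conj_eq_iff_re] at hconj
    set r : ℝ := μ.re with hr
    have hμr : μ = (r : ℂ) := hconj.symm
    have hrlt : r < lam₁ := by
      have hle : r ≤ lam₁ := hlam.2 (by rw [Set.mem_setOf_eq, ← hμr]; exact heig)
      rcases hle.lt_or_eq with h | h
      · exact h
      · exact absurd (by rw [hμr, h]) hμ
    -- compute the inner products along the flow
    have hcomp : ∀ t : ℝ,
        (inner ℂ w ((NormedSpace.exp (t • β) * (g : V →L[ℂ] V)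
          * NormedSpace.exp (-(t • β))) v) : ℂ)
        = (Real.exp (t * (r - lam₁)) : ℂ) * (inner ℂ w u : ℂ) := by
      intro t
      have h1 : NormedSpace.exp (-(t • β)) v = Real.exp (-t * lam₁) • v := by
        rw [← neg_smul]
        exact hexp_eig (-t) lam₁ v hv
      have h2 : ∀ x : V, (inner ℂ w (NormedSpace.exp (t • β) x) : ℂ)
          = (Real.exp (t * r) : ℂ) * (inner ℂ w x : ℂ) := by
        intro x
        have hsym : (inner ℂ (NormedSpace.exp (t • β) w) x : ℂ)
            = inner ℂ w (NormedSpace.exp (t • β) x) := (hexp_sa t).isSymmetric w x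
        rw [← hsym, hexp_eig t r w (by rw [← hμr]; exact hw), ← Complex.coe_smul,
          inner_smul_left, Complex.conj_ofReal]
      rw [ContinuousLinearMap.mul_apply, ContinuousLinearMap.mul_apply, h1,
        ContinuousLinearMap.map_smul_of_tower, ContinuousLinearMap.map_smul_of_tower,
        ← Complex.coe_smul, inner_smul_right, h2, ← hu]
      rw [← mul_assoc, ← Complex.ofReal_mul, ← Real.exp_add]
      ring_nf
    -- the limit of these inner products exists
    have htend0 : Filter.Tendsto
        (fun t : ℝ => ((NormedSpace.exp (t • β) * (g : V →L[ℂ] V)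
          * NormedSpace.exp (-(t • β))) v)) Filter.atBot (nhds (L v)) :=
      ((ContinuousLinearMap.apply ℂ V v).continuous.tendsto L).comp hL
    have htend1 : Filter.Tendsto
        (fun t : ℝ => (inner ℂ w ((NormedSpace.exp (t • β) * (g : V →L[ℂ] V)
          * NormedSpace.exp (-(t • β))) v) : ℂ)) Filter.atBot (nhds (inner ℂ w (L v) : ℂ)) :=
      ((innerSL ℂ w).continuous.tendsto (L v)).comp htend0
    have htend2 : Filter.Tendsto
        (fun t : ℝ => (Real.exp (t * (r - lam₁)) : ℂ) * (inner ℂ w u : ℂ))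
        Filter.atBot (nhds (inner ℂ w (L v) : ℂ)) := htend1.congr fun t => hcomp t
    -- conclude inner w u = 0
    by_contra hne
    have hnorm : Filter.Tendsto
        (fun t : ℝ => ‖(Real.exp (t * (r - lam₁)) : ℂ) * (inner ℂ w u : ℂ)‖)
        Filter.atBot (nhds ‖(inner ℂ w (L v) : ℂ)‖) := htend2.norm
    have hnorm' : Filter.Tendsto
        (fun t : ℝ => Real.exp (t * (r - lam₁)) * ‖(inner ℂ w u : ℂ)‖)
        Filter.atBot (nhds ‖(inner ℂ w (L v) : ℂ)‖) := by
      refine hnorm.congr fun t => ?_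
      rw [norm_mul, Complex.norm_real, Real.norm_eq_abs, abs_of_pos (Real.exp_pos _)]
    have hatTop : Filter.Tendsto (fun t : ℝ => Real.exp (t * (r - lam₁)) * ‖(inner ℂ w u : ℂ)‖)
        Filter.atBot Filter.atTop := by
      have h1 : Filter.Tendsto (fun t : ℝ => t * (r - lam₁)) Filter.atBot Filter.atTop :=
        Filter.tendsto_id.atBot_mul_const_of_neg (by linarith)
      have h2 : Filter.Tendsto (fun t : ℝ => Real.exp (t * (r - lam₁)))
          Filter.atBot Filter.atTop := Real.tendsto_exp_atTop.comp h1
      exact h2.atTop_mul_const (norm_pos_iff.mpr hne)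
    exact not_tendsto_nhds_of_tendsto_atTop hatTop _ hnorm'
  -- conclude by a dimension count
  have hle : Submodule.map (((g : V →L[ℂ] V) : V →ₗ[ℂ] V)) W ≤ W := by
    rintro _ ⟨v, hv, rfl⟩
    exact hmaps v hv
  have he : Module.finrank ℂ (Submodule.map (((g : V →L[ℂ] V) : V →ₗ[ℂ] V)) W)
      = Module.finrank ℂ W := by
    have := LinearEquiv.finrank_map_eq (ContinuousLinearEquiv.ofUnit g).toLinearEquiv W
    exact this
  exact Submodule.eq_of_le_of_finrank_eq hle he
end

section
/- Let V be a finite-dimensional complex inner product space and β a self-adjoint endomorphism of V. Then the set G^{β+} := {g ∈ GL(V) : lim_{t → −∞} exp(tβ) g exp(−tβ) exists in End(V)} is a subgroup of GL(V): it contains the identity, is closed under composition, and is closed under taking inverses. -/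
open Filter NormedSpace


/-- Let `β` be a self-adjoint endomorphism of a finite-dimensional complex
inner product space `V`.  Then
`G^{β+} = {g ∈ GL(V) : lim_{t → −∞} exp(tβ) g exp(−tβ) exists in End(V)}` is a subgroup of
`GL(V)`: it contains the identity, and is closed under composition and under inverses. -/
theorem stmt_15 {V : Type*} [NormedAddCommGroup V] [InnerProductSpace ℂ V]
    [FiniteDimensional ℂ V] (β : V →L[ℂ] V) (hβ : IsSelfAdjoint β) :
    (1 : (V →L[ℂ] V)ˣ) ∈ {g : (V →L[ℂ] V)ˣ | ∃ L : V →L[ℂ] V, Filter.Tendsto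
        (fun t : ℝ =>
          NormedSpace.exp (t • β) * (g : V →L[ℂ] V) * NormedSpace.exp (-(t • β)))
        Filter.atBot (nhds L)} ∧
    (∀ g ∈ {g : (V →L[ℂ] V)ˣ | ∃ L : V →L[ℂ] V, Filter.Tendsto
        (fun t : ℝ =>
          NormedSpace.exp (t • β) * (g : V →L[ℂ] V) * NormedSpace.exp (-(t • β)))
        Filter.atBot (nhds L)},
      ∀ h ∈ {g : (V →L[ℂ] V)ˣ | ∃ L : V →L[ℂ] V, Filter.Tendsto
        (fun t : ℝ =>
          NormedSpace.exp (t • β) * (g : V →L[ℂ] V) * NormedSpace.exp (-(t • β)))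
        Filter.atBot (nhds L)},
      g * h ∈ {g : (V →L[ℂ] V)ˣ | ∃ L : V →L[ℂ] V, Filter.Tendsto
        (fun t : ℝ =>
          NormedSpace.exp (t • β) * (g : V →L[ℂ] V) * NormedSpace.exp (-(t • β)))
        Filter.atBot (nhds L)}) ∧
    (∀ g ∈ {g : (V →L[ℂ] V)ˣ | ∃ L : V →L[ℂ] V, Filter.Tendsto
        (fun t : ℝ =>
          NormedSpace.exp (t • β) * (g : V →L[ℂ] V) * NormedSpace.exp (-(t • β)))
        Filter.atBot (nhds L)},
      g⁻¹ ∈ {g : (V →L[ℂ] V)ˣ | ∃ L : V →L[ℂ] V, Filter.Tendsto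
        (fun t : ℝ =>
          NormedSpace.exp (t • β) * (g : V →L[ℂ] V) * NormedSpace.exp (-(t • β)))
        Filter.atBot (nhds L)}) := by
  set E : ℝ → (V →L[ℂ] V) := fun t => exp (t • β) with hE
  set E' : ℝ → (V →L[ℂ] V) := fun t => exp (-(t • β)) with hE'
  have key1 : ∀ t, E t * E' t = 1 := by
    intro t
    let +nondep : NormedAlgebra ℚ (V →L[ℂ] V) := .restrictScalars ℚ ℂ (V →L[ℂ] V)
    rw [hE, hE', ← exp_add_of_commute ((Commute.refl (t • β)).neg_right), add_neg_cancel,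
      exp_zero]
  have key2 : ∀ t, E' t * E t = 1 := by
    intro t
    let +nondep : NormedAlgebra ℚ (V →L[ℂ] V) := .restrictScalars ℚ ℂ (V →L[ℂ] V)
    rw [hE, hE', ← exp_add_of_commute ((Commute.refl (t • β)).neg_left), neg_add_cancel,
      exp_zero]
  have coe_mul : ∀ a b : V →L[ℂ] V, ((a * b : V →L[ℂ] V) : V →ₗ[ℂ] V)
      = ((a : V →ₗ[ℂ] V) * (b : V →ₗ[ℂ] V)) := fun a b => rfl
  refine ⟨⟨1, ?_⟩, ?_, ?_⟩
  · have : (fun t : ℝ => E t * ((1 : (V →L[ℂ] V)ˣ) : V →L[ℂ] V) * E' t) = fun _ => 1 := by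
      funext t; rw [Units.val_one, mul_one, key1]
    rw [this]; exact tendsto_const_nhds
  · rintro g ⟨Lg, hLg⟩ h ⟨Lh, hLh⟩
    refine ⟨Lg * Lh, ?_⟩
    have : (fun t : ℝ => E t * ((g * h : (V →L[ℂ] V)ˣ) : V →L[ℂ] V) * E' t)
        = fun t => (E t * (g : V →L[ℂ] V) * E' t) * (E t * (h : V →L[ℂ] V) * E' t) := by
      funext t
      rw [Units.val_mul]
      simp only [mul_assoc]
      rw [← mul_assoc (E' t) (E t), key2, one_mul]
    rw [this]
    exact hLg.mul hLh
  · rintro g ⟨L, hL⟩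
    -- The limit L has determinant equal to det g, hence is invertible.
    have hdetconst : ∀ t : ℝ, (E t * (g : V →L[ℂ] V) * E' t).det = (g : V →L[ℂ] V).det := by
      intro t
      show LinearMap.det ((E t * (g : V →L[ℂ] V) * E' t : V →L[ℂ] V) : V →ₗ[ℂ] V) = _
      have h1 : LinearMap.det ((E t : V →L[ℂ] V) : V →ₗ[ℂ] V)
          * LinearMap.det ((E' t : V →L[ℂ] V) : V →ₗ[ℂ] V) = 1 := by
        rw [← map_mul, ← coe_mul, key1]
        exact map_one LinearMap.det
      rw [coe_mul, coe_mul, map_mul, map_mul]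
      calc LinearMap.det ((E t : V →L[ℂ] V) : V →ₗ[ℂ] V)
            * LinearMap.det ((g : V →L[ℂ] V) : V →ₗ[ℂ] V)
            * LinearMap.det ((E' t : V →L[ℂ] V) : V →ₗ[ℂ] V)
          = LinearMap.det ((g : V →L[ℂ] V) : V →ₗ[ℂ] V)
            * (LinearMap.det ((E t : V →L[ℂ] V) : V →ₗ[ℂ] V)
              * LinearMap.det ((E' t : V →L[ℂ] V) : V →ₗ[ℂ] V)) := by ring
        _ = _ := by rw [h1, mul_one]
    have hdetg : (g : V →L[ℂ] V).det ≠ 0 := by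
      have hu : IsUnit ((g : V →L[ℂ] V) : V →ₗ[ℂ] V) := by
        refine ⟨⟨((g : V →L[ℂ] V) : V →ₗ[ℂ] V), (((g⁻¹ : (V →L[ℂ] V)ˣ) : V →L[ℂ] V) : V →ₗ[ℂ] V),
          ?_, ?_⟩, rfl⟩
        · rw [← coe_mul, ← Units.val_mul, mul_inv_cancel]; rfl
        · rw [← coe_mul, ← Units.val_mul, inv_mul_cancel]; rfl
      exact (LinearMap.isUnit_det _ hu).ne_zero
    have hdetL : L.det = (g : V →L[ℂ] V).det := by
      have h1 : Tendsto (fun t : ℝ => (E t * (g : V →L[ℂ] V) * E' t).det) atBot (nhds L.det) :=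
        (ContinuousLinearMap.continuous_det.tendsto L).comp hL
      have h2 : Tendsto (fun t : ℝ => (E t * (g : V →L[ℂ] V) * E' t).det) atBot
          (nhds ((g : V →L[ℂ] V).det)) := by
        simp only [hdetconst]; exact tendsto_const_nhds
      exact tendsto_nhds_unique h1 h2
    -- build a unit with value L
    have hLdet : LinearMap.det ((L : V →L[ℂ] V) : V →ₗ[ℂ] V) ≠ 0 := by
      rw [show LinearMap.det ((L : V →L[ℂ] V) : V →ₗ[ℂ] V) = L.det from rfl, hdetL]
      exact hdetg
    let b := Module.finBasis ℂ V
    have hudet : IsUnit (LinearMap.toMatrix b b ((L : V →L[ℂ] V) : V →ₗ[ℂ] V)).det := by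
      rw [LinearMap.det_toMatrix]
      exact isUnit_iff_ne_zero.2 hLdet
    let e : V ≃ₗ[ℂ] V := LinearEquiv.ofIsUnitDet hudet
    have he : (e : V →ₗ[ℂ] V) = ((L : V →L[ℂ] V) : V →ₗ[ℂ] V) := LinearEquiv.coe_ofIsUnitDet _
    let E₀ : V ≃L[ℂ] V := e.toContinuousLinearEquiv
    let Lu : (V →L[ℂ] V)ˣ := E₀.toUnit
    have hLu : (Lu : V →L[ℂ] V) = L := by
      ext x
      exact LinearMap.congr_fun he x
    refine ⟨Ring.inverse L, ?_⟩
    have hinv : Tendsto (fun t : ℝ => Ring.inverse (E t * (g : V →L[ℂ] V) * E' t)) atBot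
        (nhds (Ring.inverse L)) := by
      have := (NormedRing.inverse_continuousAt Lu).tendsto
      rw [hLu] at this
      exact this.comp hL
    have heq : (fun t : ℝ => E t * ((g⁻¹ : (V →L[ℂ] V)ˣ) : V →L[ℂ] V) * E' t)
        = fun t : ℝ => Ring.inverse (E t * (g : V →L[ℂ] V) * E' t) := by
      funext t
      have hu : IsUnit (E t * (g : V →L[ℂ] V) * E' t) := by
        refine ⟨⟨E t * (g : V →L[ℂ] V) * E' t,
          E t * ((g⁻¹ : (V →L[ℂ] V)ˣ) : V →L[ℂ] V) * E' t, ?_, ?_⟩, rfl⟩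
        · simp only [mul_assoc]
          rw [← mul_assoc (E' t) (E t), key2, one_mul, ← mul_assoc (g : V →L[ℂ] V),
            ← Units.val_mul, mul_inv_cancel]
          simp [key1 t]
        · simp only [mul_assoc]
          rw [← mul_assoc (E' t) (E t), key2, one_mul,
            ← mul_assoc ((g⁻¹ : (V →L[ℂ] V)ˣ) : V →L[ℂ] V), ← Units.val_mul, inv_mul_cancel]
          simp [key1 t]
      obtain ⟨u, hu'⟩ := hu
      rw [← hu', Ring.inverse_unit]
      -- u⁻¹ val equals E t * g⁻¹ * E' t
      have : (u : V →L[ℂ] V) * (E t * ((g⁻¹ : (V →L[ℂ] V)ˣ) : V →L[ℂ] V) * E' t) = 1 := by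
        rw [hu']
        simp only [mul_assoc]
        rw [← mul_assoc (E' t) (E t), key2, one_mul, ← mul_assoc (g : V →L[ℂ] V),
          ← Units.val_mul, mul_inv_cancel]
        simp [key1 t]
      calc (E t * ((g⁻¹ : (V →L[ℂ] V)ˣ) : V →L[ℂ] V) * E' t)
          = ((u⁻¹ : (V →L[ℂ] V)ˣ) : V →L[ℂ] V) * ((u : V →L[ℂ] V)
            * (E t * ((g⁻¹ : (V →L[ℂ] V)ˣ) : V →L[ℂ] V) * E' t)) := by
            rw [← mul_assoc, ← Units.val_mul, inv_mul_cancel]; simp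
        _ = ((u⁻¹ : (V →L[ℂ] V)ˣ) : V →L[ℂ] V) := by rw [this, mul_one]
    rw [heq]
    exact hinv
end

section
/- Let V be a finite-dimensional complex vector space and g an invertible linear endomorphism of V. Let S ⊆ ℙ(V) be a connected subset such that the nonzero vectors representing points of S span V, and suppose that g fixes every point of S (i.e., for every [v] ∈ S one has [gv] = [v]). Then g is a scalar multiple of the identity; in particular g fixes every point of ℙ(V). -/
open scoped LinearAlgebra.Projectivization

noncomputable instance stmt16.instTop (V : Type*) [NormedAddCommGroup V]
    [NormedSpace ℂ V] : TopologicalSpace (ℙ ℂ V) :=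
  instTopologicalSpaceQuotient

/-- Let `V` be a finite-dimensional complex vector space and `g` an
invertible linear endomorphism of `V`.  Let `S ⊆ ℙ(V)` be a connected subset whose
representatives span `V`, and suppose `g` fixes every point of `S` (i.e. `[gv] = [v]`, that
is, `gv` is a nonzero scalar multiple of `v`, for every `[v] ∈ S`).  Then `g` is a scalar
multiple of the identity; in particular `g` fixes every point of `ℙ(V)`. -/
theorem stmt_16 {V : Type*} [NormedAddCommGroup V] [NormedSpace ℂ V]
    [FiniteDimensional ℂ V] (g : V →ₗ[ℂ] V) (hg : Function.Bijective g)
    (S : Set (ℙ ℂ V)) (hconn : IsPreconnected S)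
    (hspan : Submodule.span ℂ {v : V | ∃ hv : v ≠ 0, Projectivization.mk ℂ v hv ∈ S} = ⊤)
    (hfix : ∀ (v : V) (hv : v ≠ 0), Projectivization.mk ℂ v hv ∈ S →
      ∃ c : ℂ, c ≠ 0 ∧ g v = c • v) :
    ∃ c : ℂ, ∀ v : V, g v = c • v := by
  classical
  by_cases hS : S.Nonempty
  · obtain ⟨x0, hx0⟩ := hS
    -- the "eigenvalue c" locus in projective space
    set T : ℂ → Set (ℙ ℂ V) := fun c => {x : ℙ ℂ V | g x.rep = c • x.rep} with hTdef
    -- membership of a point mk v hv in T c is equivalent to g v = c • v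
    have hmemT : ∀ (v : V) (hv : v ≠ 0) (c : ℂ),
        Projectivization.mk ℂ v hv ∈ T c ↔ g v = c • v := by
      intro v hv c
      obtain ⟨a, ha⟩ := Projectivization.exists_smul_eq_mk_rep ℂ v hv
      have ha' : (a : ℂ) • v = (Projectivization.mk ℂ v hv).rep := by
        rw [← ha]; rfl
      simp only [hTdef, Set.mem_setOf_eq, ← ha', map_smul, smul_comm c (a : ℂ)]
      constructor
      · intro h
        exact smul_right_injective V (Units.ne_zero a) h
      · intro h; rw [h]
    -- each T c is closed
    have hclosed : ∀ c : ℂ, IsClosed (T c) := by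
      intro c
      refine (isQuotientMap_quot_mk
        (r := (projectivizationSetoid ℂ V).r)).isClosed_preimage.mp ?_
      have hpre : (Quot.mk (projectivizationSetoid ℂ V).r : {v : V // v ≠ 0} → ℙ ℂ V) ⁻¹' (T c)
          = Subtype.val ⁻¹' ((g - c • (1 : V →ₗ[ℂ] V)) ⁻¹' {0}) := by
        ext w
        have hw : (Quot.mk (projectivizationSetoid ℂ V).r w : ℙ ℂ V)
            = Projectivization.mk ℂ w.1 w.2 := rfl
        simp only [Set.mem_preimage, hw, hmemT w.1 w.2 c, Set.mem_singleton_iff,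
          LinearMap.sub_apply, LinearMap.smul_apply, Module.End.one_apply, sub_eq_zero]
        exact hmemT w.1 w.2 c
      rw [hpre]
      exact (isClosed_singleton.preimage (LinearMap.continuous_of_finiteDimensional
        (g - c • (1 : V →ₗ[ℂ] V)))).preimage continuous_subtype_val
    -- eigenvalue of the basepoint
    obtain ⟨c0, hc0ne, hc0⟩ := hfix x0.rep x0.rep_nonzero (by rw [x0.mk_rep]; exact hx0)
    have hx0T : x0 ∈ T c0 := hc0
    -- every point of S lies in some T c with c an eigenvalue
    have hEig : ∀ x ∈ S, ∃ c : ℂ, Module.End.HasEigenvalue (g : Module.End ℂ V) c ∧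
        x ∈ T c := by
      intro x hx
      obtain ⟨c, hcne, hc⟩ := hfix x.rep x.rep_nonzero (by rw [x.mk_rep]; exact hx)
      exact ⟨c, Module.End.hasEigenvalue_of_hasEigenvector
        ⟨Module.End.mem_eigenspace_iff.2 hc, x.rep_nonzero⟩, hc⟩
    -- distinct eigenvalue loci are disjoint
    have hdisj : ∀ c c' : ℂ, c ≠ c' → ∀ x, x ∈ T c → x ∈ T c' → False := by
      intro c c' hne x h1 h2
      have : (c - c') • x.rep = 0 := by
        rw [sub_smul, ← h1, ← h2, sub_self]
      rcases smul_eq_zero.1 this with h | h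
      · exact hne (sub_eq_zero.1 h)
      · exact x.rep_nonzero h
    -- the union of the other eigenvalue loci is closed (finitely many eigenvalues)
    have hEfin : Set.Finite {c : ℂ | Module.End.HasEigenvalue (g : Module.End ℂ V) c} :=
      Module.End.finite_hasEigenvalue (g : Module.End ℂ V)
    set F : Set (ℙ ℂ V) :=
      ⋃ c ∈ {c : ℂ | Module.End.HasEigenvalue (g : Module.End ℂ V) c ∧ c ≠ c0}, T c with hFdef
    have hFclosed : IsClosed F :=
      Set.Finite.isClosed_biUnion (hEfin.subset (fun c hc => hc.1)) fun c _ => hclosed c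
    -- cover of S
    have hcover : S ⊆ T c0 ∪ F := by
      intro x hx
      obtain ⟨c, hceig, hcT⟩ := hEig x hx
      by_cases hcc : c = c0
      · exact Or.inl (hcc ▸ hcT)
      · exact Or.inr (Set.mem_biUnion ⟨hceig, hcc⟩ hcT)
    -- S ∩ (T c0 ∩ F) = ∅
    have hempty : ¬ (S ∩ (T c0 ∩ F)).Nonempty := by
      rintro ⟨x, -, hxT, hxF⟩
      obtain ⟨c, hc, hxTc⟩ := Set.mem_iUnion₂.1 hxF
      exact hdisj c0 c (Ne.symm hc.2) x hxT hxTc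
    -- by preconnectedness, S ∩ F is empty, so S ⊆ T c0
    have hSsub : S ⊆ T c0 := by
      have hnotF : ¬ (S ∩ F).Nonempty := fun hn =>
        hempty (isPreconnected_closed_iff.1 hconn (T c0) F (hclosed c0) hFclosed hcover
          ⟨x0, hx0, hx0T⟩ hn)
      intro x hx
      rcases hcover hx with h | h
      · exact h
      · exact absurd ⟨x, hx, h⟩ hnotF
    -- conclude g = c0 • id
    refine ⟨c0, fun v => ?_⟩
    have hle : Submodule.span ℂ {v : V | ∃ hv : v ≠ 0, Projectivization.mk ℂ v hv ∈ S}
        ≤ LinearMap.ker (g - c0 • (1 : V →ₗ[ℂ] V)) := by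
      rw [Submodule.span_le]
      rintro w ⟨hw, hwS⟩
      have : g w = c0 • w := (hmemT w hw c0).1 (hSsub hwS)
      simp [LinearMap.mem_ker, this]
    rw [hspan, top_le_iff] at hle
    have hv : v ∈ LinearMap.ker (g - c0 • (1 : V →ₗ[ℂ] V)) := hle ▸ Submodule.mem_top
    simpa [LinearMap.mem_ker, sub_eq_zero] using hv
  · -- S is empty: then V is trivial
    rw [Set.not_nonempty_iff_eq_empty] at hS
    refine ⟨0, fun v => ?_⟩
    have hset : {v : V | ∃ hv : v ≠ 0, Projectivization.mk ℂ v hv ∈ S} = ∅ := by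
      simp [hS]
    rw [hset, Submodule.span_empty] at hspan
    have hv0 : v = 0 := by
      have : v ∈ (⊥ : Submodule ℂ V) := hspan ▸ Submodule.mem_top
      simpa using this
    simp [hv0]
end
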